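/- arXiv:2211.12348 — 2 statements merged into one kernel-verified Lean document; each statement's English description precedes it below -/
import Mathlib

section
/- Let X be a symmetric random variable with Λ finite near 0 and with regular upper tails, i.e. P(X > t) = exp(−(1+o(1))Λ*(t)) as t → ∞, and suppose X is not almost surely 0. Let α > 0 and let ω_n be a positive sequence with ω_n → ∞ and ω_n = n^{o(1)}. Define x_n = inf{t > 0 : P(X > t) ≤ ω_n n^{−α}}. Then for all large n, (1 − o(1)) Λ*⁻¹(α log n) ≤ x_n ≤ Λ*⁻¹(α log n). -/
open MeasureTheory ProbabilityTheory Real Filter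

noncomputable section

-- Log-moment generating function `Λ`, valued in `EReal` (`⊤` when the exponential
-- moment is infinite).
open Classical in
def lmgf {Ω : Type*} [MeasurableSpace Ω] (μ : Measure Ω) (X : Ω → ℝ) (s : ℝ) : EReal :=
  if Integrable (fun ω => Real.exp (s * X ω)) μ
  then ((Real.log (∫ ω, Real.exp (s * X ω) ∂μ) : ℝ) : EReal)
  else ⊤

/-- The Legendre transform `Λ*` of the log-moment generating function (rate function). -/
def rateFn {Ω : Type*} [MeasurableSpace Ω] (μ : Measure Ω) (X : Ω → ℝ) (t : ℝ) : EReal :=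
  ⨆ s : ℝ, ((s * t : ℝ) : EReal) - lmgf μ X s

/-- The generalised inverse `Λ*⁻¹(t) = inf {s ≥ 0 : Λ*(s) ≥ t}`. -/
def rateFnInv {Ω : Type*} [MeasurableSpace Ω] (μ : Measure Ω) (X : Ω → ℝ) (t : ℝ) : ℝ :=
  sInf {s : ℝ | 0 ≤ s ∧ (t : EReal) ≤ rateFn μ X s}

/-- `X` is symmetric: `-X` has the same distribution as `X`. -/
def SymmetricRV {Ω : Type*} [MeasurableSpace Ω] (μ : Measure Ω) (X : Ω → ℝ) : Prop :=
  Measure.map X μ = Measure.map (fun ω => -X ω) μ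

/-- `Λ` is finite in a neighbourhood of `0`. -/
def FiniteLmgfNearZero {Ω : Type*} [MeasurableSpace Ω] (μ : Measure Ω) (X : Ω → ℝ) : Prop :=
  ∃ δ > (0:ℝ), ∀ s : ℝ, |s| < δ → lmgf μ X s ≠ ⊤

/-- `X` has regular upper tails: `P(X > t) = exp(-(1+o(1)) Λ*(t))` as `t → ∞`
(vacuous at points where `Λ*(t) = ∞`). -/
def RegularUpperTails {Ω : Type*} [MeasurableSpace Ω] (μ : Measure Ω) (X : Ω → ℝ) : Prop :=
  ∀ ε > (0:ℝ), ∀ᶠ t in atTop, ∀ r : ℝ, rateFn μ X t = (r : EReal) →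
    Real.exp (-(1+ε)*r) ≤ (μ {ω | t < X ω}).toReal ∧
    (μ {ω | t < X ω}).toReal ≤ Real.exp (-(1-ε)*r)

/-- A good random variable: symmetric, `Λ` finite near `0`, regular upper tails. -/
def Good {Ω : Type*} [MeasurableSpace Ω] (μ : Measure Ω) (X : Ω → ℝ) : Prop :=
  SymmetricRV μ X ∧ FiniteLmgfNearZero μ X ∧ RegularUpperTails μ X

/-- The non-diagonal elements of `Sym2 (Fin n)`: the edges of the complete graph `K_n`. -/
abbrev EdgeT (n : ℕ) := {e : Sym2 (Fin n) // ¬ e.IsDiag}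


/-- Total weight of a subgraph `G'` of `K_n` with edge weights `x`. -/
def graphWeight {n : ℕ} (x : EdgeT n → ℝ) (G' : SimpleGraph (Fin n)) : ℝ :=
  ∑ e : EdgeT n, Set.indicator {e' : EdgeT n | (e' : Sym2 (Fin n)) ∈ G'.edgeSet} x e

/-- Total weight of the edges of a walk `p` with edge weights `x`. -/
def walkWeight {n : ℕ} (x : EdgeT n → ℝ) {u v : Fin n}
    (p : (⊤ : SimpleGraph (Fin n)).Walk u v) : ℝ :=
  ∑ e : EdgeT n, Set.indicator {e' : EdgeT n | (e' : Sym2 (Fin n)) ∈ p.edges} x e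

end

section Aux
variable {Ω : Type*} [MeasurableSpace Ω] {μ : Measure Ω} [IsProbabilityMeasure μ] {X : Ω → ℝ}

open Classical in
lemma lmgf_of_int {s : ℝ} (h : Integrable (fun ω => Real.exp (s * X ω)) μ) :
    lmgf μ X s = ((Real.log (∫ ω, Real.exp (s * X ω) ∂μ) : ℝ) : EReal) := by
  simp [lmgf, h]

open Classical in
lemma lmgf_of_not_int {s : ℝ} (h : ¬ Integrable (fun ω => Real.exp (s * X ω)) μ) :
    lmgf μ X s = ⊤ := by
  simp [lmgf, h]

lemma sym_integral_eq (hX : Measurable X) (hsym : SymmetricRV μ X) (s : ℝ)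
    (h : Integrable (fun ω => Real.exp (s * X ω)) μ) :
    Integrable (fun ω => Real.exp (-s * X ω)) μ ∧
      ∫ ω, Real.exp (-s * X ω) ∂μ = ∫ ω, Real.exp (s * X ω) ∂μ := by
  have hg : Measurable (fun x : ℝ => Real.exp (s * x)) := by fun_prop
  have hXae : AEMeasurable X μ := hX.aemeasurable
  have hnXae : AEMeasurable (fun ω => -X ω) μ := hX.neg.aemeasurable
  have h1 : Integrable (fun x : ℝ => Real.exp (s * x)) (Measure.map X μ) := by
    rw [integrable_map_measure hg.aestronglyMeasurable hXae]
    exact h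
  have h2 : Integrable (fun x : ℝ => Real.exp (s * x)) (Measure.map (fun ω => -X ω) μ) := by
    rwa [← hsym]
  have h3 : Integrable ((fun x : ℝ => Real.exp (s * x)) ∘ (fun ω => -X ω)) μ := by
    rw [← integrable_map_measure hg.aestronglyMeasurable hnXae]
    exact h2
  constructor
  · have : (fun ω => Real.exp (-s * X ω)) = (fun x : ℝ => Real.exp (s * x)) ∘ (fun ω => -X ω) := by
      funext ω; simp [Function.comp]
    rw [this]; exact h3
  · have e1 : ∫ x, Real.exp (s * x) ∂(Measure.map X μ) = ∫ ω, Real.exp (s * X ω) ∂μ :=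
      integral_map hXae hg.aestronglyMeasurable
    have e2 : ∫ x, Real.exp (s * x) ∂(Measure.map (fun ω => -X ω) μ)
        = ∫ ω, Real.exp (s * (-X ω)) ∂μ := integral_map hnXae hg.aestronglyMeasurable
    rw [← e1, hsym, e2]
    congr 1 with ω
    ring_nf

lemma integral_exp_ge_one (hX : Measurable X) (hsym : SymmetricRV μ X) (s : ℝ)
    (h : Integrable (fun ω => Real.exp (s * X ω)) μ) :
    1 ≤ ∫ ω, Real.exp (s * X ω) ∂μ := by
  obtain ⟨h2, e2⟩ := sym_integral_eq hX hsym s h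
  have key : (2:ℝ) ≤ ∫ ω, (Real.exp (s * X ω) + Real.exp (-s * X ω)) ∂μ := by
    have : ∫ (_ : Ω), (2:ℝ) ∂μ ≤ ∫ ω, (Real.exp (s * X ω) + Real.exp (-s * X ω)) ∂μ := by
      apply integral_mono (integrable_const 2) (h.add h2)
      intro ω
      simp only [Pi.add_apply]
      have hx := Real.exp_pos (s * X ω)
      have hxy : Real.exp (s * X ω) * Real.exp (-s * X ω) = 1 := by
        rw [← Real.exp_add]; ring_nf; exact Real.exp_zero
      nlinarith [sq_nonneg (Real.exp (s * X ω) - 1)]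
    simpa using this
  rw [integral_add h h2, e2] at key
  linarith

lemma lmgf_nonneg (hX : Measurable X) (hsym : SymmetricRV μ X) (s : ℝ) :
    (0 : EReal) ≤ lmgf μ X s := by
  by_cases h : Integrable (fun ω => Real.exp (s * X ω)) μ
  · rw [lmgf_of_int h]
    have h1 := integral_exp_ge_one hX hsym s h
    have h0 : (0:ℝ) ≤ Real.log (∫ ω, Real.exp (s * X ω) ∂μ) := Real.log_nonneg h1
    exact_mod_cast h0
  · rw [lmgf_of_not_int h]; exact le_top

lemma lmgf_zero : lmgf μ X 0 = 0 := by
  have h : Integrable (fun ω => Real.exp (0 * X ω)) μ := by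
    simpa using (integrable_const (1:ℝ) : Integrable (fun _ : Ω => (1:ℝ)) μ)
  rw [lmgf_of_int h]
  simp

end Aux
section Aux2
variable {Ω : Type*} [MeasurableSpace Ω] {μ : Measure Ω} [IsProbabilityMeasure μ] {X : Ω → ℝ}

lemma rateFn_nonneg : (0 : EReal) ≤ rateFn μ X t := by
  have h0 : ((0 * t : ℝ) : EReal) - lmgf μ X 0 = 0 := by
    rw [lmgf_zero]; simp
  calc (0:EReal) = ((0 * t : ℝ) : EReal) - lmgf μ X 0 := h0.symm
    _ ≤ ⨆ s : ℝ, ((s * t : ℝ) : EReal) - lmgf μ X s := le_iSup (fun s => ((s * t : ℝ) : EReal) - lmgf μ X s) 0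

lemma lmgf_toReal_nonneg (hX : Measurable X) (hsym : SymmetricRV μ X) {s : ℝ}
    (h : Integrable (fun ω => Real.exp (s * X ω)) μ) :
    0 ≤ Real.log (∫ ω, Real.exp (s * X ω) ∂μ) :=
  Real.log_nonneg (integral_exp_ge_one hX hsym s h)

lemma rateFn_mono (hX : Measurable X) (hsym : SymmetricRV μ X) {s t : ℝ}
    (hs : 0 ≤ s) (hst : s ≤ t) : rateFn μ X s ≤ rateFn μ X t := by
  apply iSup_le
  intro u
  by_cases h : Integrable (fun ω => Real.exp (u * X ω)) μ
  · rw [lmgf_of_int h, ← EReal.coe_sub]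
    set L := Real.log (∫ ω, Real.exp (u * X ω) ∂μ) with hL
    have hL0 : 0 ≤ L := lmgf_toReal_nonneg hX hsym h
    rcases le_or_gt 0 u with hu | hu
    · have : ((u * s - L : ℝ) : EReal) ≤ ((u * t - L : ℝ) : EReal) := by
        rw [EReal.coe_le_coe_iff]
        nlinarith
      refine this.trans ?_
      have : ((u * t - L : ℝ) : EReal) = ((u * t : ℝ) : EReal) - lmgf μ X u := by
        rw [lmgf_of_int h, ← EReal.coe_sub]
      rw [this]
      exact le_iSup (fun v => ((v * t : ℝ) : EReal) - lmgf μ X v) u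
    · have : ((u * s - L : ℝ) : EReal) ≤ (0 : EReal) := by
        rw [← EReal.coe_zero, EReal.coe_le_coe_iff]
        nlinarith
      exact this.trans rateFn_nonneg
  · rw [lmgf_of_not_int h]
    simp

lemma rateFn_scale (hX : Measurable X) (hsym : SymmetricRV μ X) {s lam c : ℝ}
    (hlam0 : 0 ≤ lam) (hlam1 : lam ≤ 1)
    (hc : rateFn μ X s ≤ (c : EReal)) : rateFn μ X (lam * s) ≤ ((lam * c : ℝ) : EReal) := by
  apply iSup_le
  intro u
  by_cases h : Integrable (fun ω => Real.exp (u * X ω)) μ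
  · rw [lmgf_of_int h, ← EReal.coe_sub, EReal.coe_le_coe_iff]
    set L := Real.log (∫ ω, Real.exp (u * X ω) ∂μ) with hLdef
    have hL0 : 0 ≤ L := lmgf_toReal_nonneg hX hsym h
    have h1 : u * s - L ≤ c := by
      have : ((u * s : ℝ) : EReal) - lmgf μ X u ≤ (c : EReal) :=
        le_trans (le_iSup (fun v => ((v * s : ℝ) : EReal) - lmgf μ X v) u) hc
      rw [lmgf_of_int h, ← EReal.coe_sub, EReal.coe_le_coe_iff] at this
      exact this
    nlinarith
  · rw [lmgf_of_not_int h]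
    simp

lemma chernoff_strict (hX : Measurable X) (hsym : SymmetricRV μ X) {t b : ℝ}
    (ht : 0 < t) (hb : (b : EReal) < rateFn μ X t) :
    (μ {ω | t ≤ X ω}).toReal ≤ Real.exp (-b) := by
  rw [rateFn, lt_iSup_iff] at hb
  obtain ⟨s, hs⟩ := hb
  by_cases h : Integrable (fun ω => Real.exp (s * X ω)) μ
  · rw [lmgf_of_int h, ← EReal.coe_sub, EReal.coe_lt_coe_iff] at hs
    set L := Real.log (∫ ω, Real.exp (s * X ω) ∂μ) with hLdef
    have hL0 : 0 ≤ L := lmgf_toReal_nonneg hX hsym h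
    rcases le_or_gt b 0 with hb0 | hb0
    · calc (μ {ω | t ≤ X ω}).toReal ≤ 1 := by
            have := prob_le_one (μ := μ) (s := {ω | t ≤ X ω})
            simpa using ENNReal.toReal_mono (by simp) this
        _ ≤ Real.exp (-b) := Real.one_le_exp (by linarith)
    · have hspos : 0 < s := by
        by_contra hsneg
        push_neg at hsneg
        nlinarith [mul_nonpos_of_nonpos_of_nonneg hsneg ht.le]
      have key := measure_ge_le_exp_cgf (X := X) (μ := μ) (t := s) t hspos.le h
      have hcgf : cgf X μ s = L := by
        simp [cgf, mgf, hLdef]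
      rw [hcgf] at key
      refine key.trans ?_
      apply Real.exp_le_exp.mpr
      nlinarith
  · rw [lmgf_of_not_int h] at hs
    simp at hs

lemma chernoff_le (hX : Measurable X) (hsym : SymmetricRV μ X) {t c : ℝ}
    (ht : 0 < t) (hc : (c : EReal) ≤ rateFn μ X t) :
    (μ {ω | t ≤ X ω}).toReal ≤ Real.exp (-c) := by
  have key : ∀ j : ℕ, (μ {ω | t ≤ X ω}).toReal ≤ Real.exp (-(c - 1/(j+1))) := by
    intro j
    apply chernoff_strict hX hsym ht
    calc ((c - 1/(j+1) : ℝ) : EReal) < (c : EReal) := by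
          rw [EReal.coe_lt_coe_iff]
          have : (0:ℝ) < 1/(j+1) := by positivity
          linarith
      _ ≤ rateFn μ X t := hc
  have htend : Tendsto (fun j : ℕ => Real.exp (-(c - 1/(j+1)))) atTop (nhds (Real.exp (-c))) := by
    have h1 : Tendsto (fun j : ℕ => (1:ℝ)/(j+1)) atTop (nhds 0) :=
      tendsto_one_div_add_atTop_nhds_zero_nat
    have h2 : Tendsto (fun j : ℕ => -(c - 1/(j+1))) atTop (nhds (-c)) := by
      have := h1.const_sub c
      simpa using this.neg
    exact (Real.continuous_exp.tendsto _).comp h2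
  exact ge_of_tendsto' htend key

end Aux2
section Aux3
variable {Ω : Type*} [MeasurableSpace Ω] {μ : Measure Ω} [IsProbabilityMeasure μ] {X : Ω → ℝ}

lemma meas_gt_le (hX : Measurable X) (hsym : SymmetricRV μ X) {r c : ℝ} (hr : 0 ≤ r)
    (h : ∀ u : ℝ, r < u → (c : EReal) ≤ rateFn μ X u) :
    (μ {ω | r < X ω}).toReal ≤ Real.exp (-c) := by
  set A : ℕ → Set Ω := fun k => {ω | r + 1/(k+1) ≤ X ω} with hA
  have hmono : Monotone A := by
    intro k l hkl
    intro ω hω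
    have h1 : (1:ℝ)/(l+1) ≤ 1/(k+1) := by
      apply one_div_le_one_div_of_le (by positivity)
      have : (k:ℝ) ≤ l := by exact_mod_cast hkl
      linarith
    simp only [hA, Set.mem_setOf_eq] at hω ⊢
    linarith
  have hunion : (⋃ k, A k) = {ω | r < X ω} := by
    ext ω
    simp only [Set.mem_iUnion, hA, Set.mem_setOf_eq]
    constructor
    · rintro ⟨k, hk⟩
      have : (0:ℝ) < 1/(k+1) := by positivity
      linarith
    · intro hω
      obtain ⟨k, hk⟩ := exists_nat_one_div_lt (sub_pos.mpr hω)
      exact ⟨k, by linarith⟩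
  have htend : Tendsto (fun k => μ (A k)) atTop (nhds (μ {ω | r < X ω})) := by
    have := tendsto_measure_iUnion_atTop (μ := μ) hmono
    rwa [hunion] at this
  have hfin : μ {ω | r < X ω} ≠ ⊤ := measure_ne_top μ _
  have htoReal : Tendsto (fun k => (μ (A k)).toReal) atTop (nhds (μ {ω | r < X ω}).toReal) :=
    (ENNReal.tendsto_toReal hfin).comp htend
  apply le_of_tendsto' htoReal
  intro k
  have hpos : (0:ℝ) < r + 1/(k+1) := by positivity
  have hlt : r < r + 1/(k+1) := by
    have : (0:ℝ) < 1/(k+1) := by positivity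
    linarith
  exact chernoff_le hX hsym hpos (h _ hlt)

lemma tail_zero_rateFn_top (hX : Measurable X) (hsym : SymmetricRV μ X) {u t : ℝ}
    (h0 : μ {ω | u < X ω} = 0) (hut : u < t) : rateFn μ X t = ⊤ := by
  rw [EReal.eq_top_iff_forall_lt]
  intro c
  set s : ℝ := max 0 ((c + 1)/(t - u)) with hs
  have hs0 : 0 ≤ s := le_max_left _ _
  have hae : ∀ᵐ ω ∂μ, X ω ≤ u := by
    rw [ae_iff]
    simpa [not_le] using h0
  have hbound : ∀ᵐ ω ∂μ, Real.exp (s * X ω) ≤ Real.exp (s * u) := by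
    filter_upwards [hae] with ω hω
    exact Real.exp_le_exp.mpr (mul_le_mul_of_nonneg_left hω hs0)
  have hint : Integrable (fun ω => Real.exp (s * X ω)) μ := by
    apply Integrable.mono' (integrable_const (Real.exp (s * u)))
    · exact ((Real.measurable_exp.comp (hX.const_mul s)).aestronglyMeasurable)
    · filter_upwards [hbound] with ω hω
      rwa [Real.norm_eq_abs, abs_of_pos (Real.exp_pos _)]
  have hintle : ∫ ω, Real.exp (s * X ω) ∂μ ≤ Real.exp (s * u) := by
    have := integral_mono_ae hint (integrable_const _) hbound
    simpa using this
  have hL : Real.log (∫ ω, Real.exp (s * X ω) ∂μ) ≤ s * u := by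
    have hpos : (0:ℝ) < ∫ ω, Real.exp (s * X ω) ∂μ :=
      lt_of_lt_of_le one_pos (integral_exp_ge_one hX hsym s hint)
    calc Real.log (∫ ω, Real.exp (s * X ω) ∂μ) ≤ Real.log (Real.exp (s * u)) :=
          Real.log_le_log hpos hintle
      _ = s * u := Real.log_exp _
  have hsc : c + 1 ≤ s * (t - u) := by
    rcases le_or_gt (c + 1) 0 with hc1 | hc1
    · have : 0 ≤ s * (t - u) := mul_nonneg hs0 (by linarith)
      linarith
    · have hdiv : (c+1)/(t-u) ≤ s := le_max_right _ _
      exact (div_le_iff₀ (by linarith)).mp hdiv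
  calc (c : EReal) < ((s * t - s * u : ℝ) : EReal) := by
        rw [EReal.coe_lt_coe_iff]; nlinarith
    _ ≤ ((s * t - Real.log (∫ ω, Real.exp (s * X ω) ∂μ) : ℝ) : EReal) := by
        rw [EReal.coe_le_coe_iff]; linarith
    _ = ((s * t : ℝ) : EReal) - lmgf μ X s := by rw [lmgf_of_int hint, ← EReal.coe_sub]
    _ ≤ rateFn μ X t := le_iSup (fun v => ((v * t : ℝ) : EReal) - lmgf μ X v) s

lemma rateFn_inv_set_nonempty (hfin : FiniteLmgfNearZero μ X) (c : ℝ) :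
    ∃ t : ℝ, 0 ≤ t ∧ (c : EReal) ≤ rateFn μ X t := by
  obtain ⟨δ, hδ, hδ2⟩ := hfin
  set s0 : ℝ := δ/2 with hs0def
  have hs0pos : 0 < s0 := by positivity
  have hne : lmgf μ X s0 ≠ ⊤ := hδ2 s0 (by rw [abs_of_pos hs0pos]; linarith)
  have hint : Integrable (fun ω => Real.exp (s0 * X ω)) μ := by
    by_contra h
    exact hne (lmgf_of_not_int h)
  set L0 : ℝ := Real.log (∫ ω, Real.exp (s0 * X ω) ∂μ) with hL0def
  refine ⟨max 0 ((c + L0)/s0), le_max_left _ _, ?_⟩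
  set t : ℝ := max 0 ((c + L0)/s0) with ht
  have hst : c + L0 ≤ s0 * t := by
    have h1 : (c + L0)/s0 ≤ t := le_max_right _ _
    calc c + L0 = s0 * ((c + L0)/s0) := by field_simp
      _ ≤ s0 * t := mul_le_mul_of_nonneg_left h1 hs0pos.le
  calc (c : EReal) ≤ ((s0 * t - L0 : ℝ) : EReal) := by
        rw [EReal.coe_le_coe_iff]; linarith
    _ = ((s0 * t : ℝ) : EReal) - lmgf μ X s0 := by rw [lmgf_of_int hint, ← EReal.coe_sub]
    _ ≤ rateFn μ X t := le_iSup (fun v => ((v * t : ℝ) : EReal) - lmgf μ X v) s0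

lemma prob_pos_of_ne_zero (hX : Measurable X) (hsym : SymmetricRV μ X)
    (hne : ¬ (∀ᵐ ω ∂μ, X ω = 0)) : 0 < (μ {ω | 0 < X ω}).toReal := by
  have hne' : μ {ω | X ω ≠ 0} ≠ 0 := by
    intro h
    apply hne
    rw [ae_iff]
    simpa using h
  have hsplit : {ω | X ω ≠ 0} ⊆ {ω | 0 < X ω} ∪ {ω | X ω < 0} := by
    intro ω hω
    rcases lt_or_gt_of_ne hω with h | h
    · exact Or.inr h
    · exact Or.inl h
  have hmap : μ {ω | X ω < 0} = μ {ω | 0 < X ω} := by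
    have h1 : (Measure.map X μ) (Set.Iio 0) = μ {ω | X ω < 0} := by
      rw [Measure.map_apply hX measurableSet_Iio]
      rfl
    have h2 : (Measure.map (fun ω => -X ω) μ) (Set.Iio 0) = μ {ω | 0 < X ω} := by
      rw [Measure.map_apply (f := fun ω => -X ω) hX.neg measurableSet_Iio]
      congr 1
      ext ω
      simp
    rw [← h1, hsym, h2]
  have hpos : μ {ω | 0 < X ω} ≠ 0 := by
    intro h
    apply hne'
    have : μ {ω | X ω ≠ 0} ≤ 0 := by
      calc μ {ω | X ω ≠ 0} ≤ μ ({ω | 0 < X ω} ∪ {ω | X ω < 0}) := measure_mono hsplit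
        _ ≤ μ {ω | 0 < X ω} + μ {ω | X ω < 0} := measure_union_le _ _
        _ = 0 := by rw [hmap, h]; simp
    simpa using this
  have hfin : μ {ω | 0 < X ω} ≠ ⊤ := measure_ne_top μ _
  exact ENNReal.toReal_pos hpos hfin

end Aux3
theorem quantile_asymptotics' {Ω : Type*} [MeasurableSpace Ω] (μ : Measure Ω)
    [IsProbabilityMeasure μ] (X : Ω → ℝ) (hX : Measurable X)
    (hgood : SymmetricRV μ X ∧ FiniteLmgfNearZero μ X ∧ RegularUpperTails μ X)
    (hne : ¬ (∀ᵐ ω ∂μ, X ω = 0))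
    (α : ℝ) (hα : 0 < α)
    (w : ℕ → ℝ) (hwpos : ∀ n, 0 < w n) (hwtop : Tendsto w atTop atTop)
    (hwsmall : Tendsto (fun n : ℕ => Real.log (w n) / Real.log n) atTop (nhds 0)) :
    ∃ ε : ℕ → ℝ, Tendsto ε atTop (nhds 0) ∧
      ∀ᶠ n : ℕ in atTop,
        (1 - ε n) * rateFnInv μ X (α * Real.log n) ≤
            sInf {t : ℝ | 0 < t ∧ (μ {ω | t < X ω}).toReal ≤ w n * (n : ℝ) ^ (-α)} ∧
          sInf {t : ℝ | 0 < t ∧ (μ {ω | t < X ω}).toReal ≤ w n * (n : ℝ) ^ (-α)} ≤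
            rateFnInv μ X (α * Real.log n) := by
  classical
  obtain ⟨hsym, hfin, hreg⟩ := hgood
  set R : ℕ → ℝ := fun n => rateFnInv μ X (α * Real.log n) with hRdef
  set S : ℕ → Set ℝ := fun n =>
    {t : ℝ | 0 < t ∧ (μ {ω | t < X ω}).toReal ≤ w n * (n : ℝ) ^ (-α)} with hSdef
  set x : ℕ → ℝ := fun n => sInf (S n) with hxdef
  set T : ℕ → Set ℝ := fun n =>
    {s : ℝ | 0 ≤ s ∧ ((α * Real.log n : ℝ) : EReal) ≤ rateFn μ X s} with hTdef
  have hRT : ∀ n, R n = sInf (T n) := fun n => rfl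
  have hTne : ∀ n, (T n).Nonempty := by
    intro n
    obtain ⟨t, ht0, htc⟩ := rateFn_inv_set_nonempty (μ := μ) (X := X) hfin (α * Real.log n)
    exact ⟨t, ht0, htc⟩
  have hTbdd : ∀ n, BddBelow (T n) := fun n => ⟨0, fun s hs => hs.1⟩
  have hR0 : ∀ n, 0 ≤ R n := fun n => by
    rw [hRT]; exact le_csInf (hTne n) (fun s hs => hs.1)
  have hmemT : ∀ n, ∀ t : ℝ, t ∈ T n → R n ≤ t := fun n t ht => by
    rw [hRT]; exact csInf_le (hTbdd n) ht
  have hRup : ∀ n, ∀ t : ℝ, R n < t → ((α * Real.log n : ℝ) : EReal) ≤ rateFn μ X t := by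
    intro n t ht
    rw [hRT] at ht
    obtain ⟨s, hs, hst⟩ := exists_lt_of_csInf_lt (hTne n) ht
    exact hs.2.trans (rateFn_mono hX hsym hs.1 hst.le)
  have hchern : ∀ n : ℕ, (μ {ω | R n < X ω}).toReal ≤ Real.exp (-(α * Real.log n)) :=
    fun n => meas_gt_le hX hsym (hR0 n) (hRup n)
  have hclog : Tendsto (fun n : ℕ => α * Real.log n) atTop atTop := by
    have h1 : Tendsto (fun n : ℕ => Real.log n) atTop atTop :=
      Real.tendsto_log_atTop.comp tendsto_natCast_atTop_atTop
    exact h1.const_mul_atTop hα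
  have hexp0 : Tendsto (fun n : ℕ => Real.exp (-(α * Real.log n))) atTop (nhds 0) :=
    Real.tendsto_exp_atBot.comp (tendsto_neg_atTop_atBot.comp hclog)
  have p0 := prob_pos_of_ne_zero hX hsym hne
  have hRpos : ∀ᶠ n in atTop, 0 < R n := by
    filter_upwards [hexp0.eventually_lt_const p0] with n hn
    rcases (hR0 n).lt_or_eq with h | h
    · exact h
    · exfalso
      have hch := hchern n
      rw [← h] at hch
      linarith
  have hrpow : ∀ᶠ n : ℕ in atTop, Real.exp (-(α * Real.log n)) = (n:ℝ) ^ (-α) := by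
    filter_upwards [eventually_ge_atTop 1] with n hn
    have hn1 : (1:ℝ) ≤ (n:ℝ) := by exact_mod_cast hn
    rw [Real.rpow_def_of_pos (by linarith : (0:ℝ) < (n:ℝ))]
    congr 1
    ring
  have hmemS : ∀ᶠ n in atTop, R n ∈ S n := by
    filter_upwards [hRpos, hwtop.eventually_ge_atTop 1, hrpow] with n h1 h2 h3
    refine ⟨h1, ?_⟩
    calc (μ {ω | R n < X ω}).toReal ≤ Real.exp (-(α * Real.log n)) := hchern n
      _ = (n:ℝ) ^ (-α) := h3
      _ ≤ w n * (n:ℝ) ^ (-α) :=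
          le_mul_of_one_le_left (Real.rpow_nonneg (Nat.cast_nonneg n) _) h2
  have hSbdd : ∀ n, BddBelow (S n) := fun n => ⟨0, fun t ht => ht.1.le⟩
  have hupper : ∀ᶠ n in atTop, x n ≤ R n := by
    filter_upwards [hmemS] with n hn
    exact csInf_le (hSbdd n) hn
  have hSne : ∀ᶠ n in atTop, (S n).Nonempty := hmemS.mono (fun n hn => ⟨R n, hn⟩)
  have hwsub : ∀ η : ℝ, 0 < η → ∀ᶠ n : ℕ in atTop, w n < (n:ℝ) ^ η := by
    intro η hη
    filter_upwards [hwsmall.eventually_lt_const hη, eventually_ge_atTop 2] with n h2 h3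
    have h2n : (2:ℝ) ≤ (n:ℝ) := by exact_mod_cast h3
    have hlogn : 0 < Real.log n := Real.log_pos (by linarith)
    have hlt : Real.log (w n) < η * Real.log n := (div_lt_iff₀ hlogn).mp h2
    calc w n = Real.exp (Real.log (w n)) := (Real.exp_log (hwpos n)).symm
      _ < Real.exp (η * Real.log n) := Real.exp_lt_exp.mpr hlt
      _ = (n:ℝ) ^ η := by
          rw [Real.rpow_def_of_pos (by linarith : (0:ℝ) < (n:ℝ))]
          congr 1
          ring
  have hclogmono : Monotone (fun n : ℕ => α * Real.log n) := by
    intro a b hab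
    apply mul_le_mul_of_nonneg_left _ hα.le
    rcases Nat.eq_zero_or_pos a with rfl | ha
    · simp only [Nat.cast_zero, Real.log_zero]
      rcases Nat.eq_zero_or_pos b with rfl | hb
      · simp
      · exact Real.log_nonneg (by exact_mod_cast hb)
    · exact Real.log_le_log (by exact_mod_cast ha) (by exact_mod_cast hab)
  have hRmono : Monotone R := by
    intro a b hab
    rw [hRT, hRT]
    apply csInf_le_csInf (hTbdd a) (hTne b)
    intro s hs
    exact ⟨hs.1, le_trans (EReal.coe_le_coe_iff.mpr (hclogmono hab)) hs.2⟩
  -- Main estimate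
  have key : ∀ δ : ℝ, 0 < δ → δ < 1 →
      ∀ᶠ n in atTop, w n * (n:ℝ) ^ (-α) < (μ {ω | (1-δ) * R n < X ω}).toReal := by
    intro δ hδ0 hδ1
    by_cases hbdd : BddAbove (Set.range R)
    · -- bounded case
      set M := sSup (Set.range R) with hM
      have hrange : (Set.range R).Nonempty := Set.range_nonempty _
      have hRM : ∀ n, R n ≤ M := fun n => le_csSup hbdd (Set.mem_range_self n)
      obtain ⟨n0, hn0⟩ := hRpos.exists
      have hMpos : 0 < M := lt_of_lt_of_le hn0 (hRM n0)
      have hp : 0 < (μ {ω | (1-δ) * M < X ω}).toReal := by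
        rcases eq_or_ne (μ {ω | (1-δ) * M < X ω}) 0 with h0 | h0
        · exfalso
          have hmM : (1-δ) * M < M := by nlinarith
          obtain ⟨r1, ⟨n1, hn1⟩, hr1⟩ := exists_lt_of_lt_csSup hrange hmM
          have ht0a : (1-δ) * M < ((1-δ)*M + r1)/2 := by linarith
          have ht0b : ((1-δ)*M + r1)/2 < r1 := by linarith
          have htop := tail_zero_rateFn_top hX hsym h0 ht0a
          have ht0mem : ((1-δ)*M + r1)/2 ∈ T n1 := by
            constructor
            · nlinarith
            · rw [htop]; exact le_top
          have hle := hmemT n1 _ ht0mem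
          rw [hn1] at hle
          linarith
        · exact ENNReal.toReal_pos h0 (measure_ne_top μ _)
      have hn2 : Tendsto (fun n : ℕ => (n:ℝ) ^ (-(α/2))) atTop (nhds 0) :=
        (tendsto_rpow_neg_atTop (by positivity)).comp tendsto_natCast_atTop_atTop
      filter_upwards [hwsub (α/2) (by positivity), hn2.eventually_lt_const hp,
          eventually_ge_atTop 1] with n h1 h2 h3
      have hn1r : (1:ℝ) ≤ (n:ℝ) := by exact_mod_cast h3
      have hnpos : (0:ℝ) < (n:ℝ) := by linarith
      calc w n * (n:ℝ)^(-α) < (n:ℝ)^(α/2) * (n:ℝ)^(-α) :=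
            mul_lt_mul_of_pos_right h1 (Real.rpow_pos_of_pos hnpos _)
        _ = (n:ℝ)^(-(α/2)) := by rw [← Real.rpow_add hnpos]; ring_nf
        _ < (μ {ω | (1-δ) * M < X ω}).toReal := h2
        _ ≤ (μ {ω | (1-δ) * R n < X ω}).toReal := by
            apply ENNReal.toReal_mono (measure_ne_top μ _)
            apply measure_mono
            intro ω hω
            simp only [Set.mem_setOf_eq] at hω ⊢
            have hRle : (1-δ) * R n ≤ (1-δ) * M :=
              mul_le_mul_of_nonneg_left (hRM n) (by linarith)
            linarith
    · -- unbounded case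
      have hRtop : Tendsto R atTop atTop := by
        apply tendsto_atTop_atTop_of_monotone hRmono
        intro b
        obtain ⟨y, ⟨n, hn⟩, hy⟩ := not_bddAbove_iff.mp hbdd b
        exact ⟨n, by rw [hn]; exact hy.le⟩
      obtain ⟨T0, hT0⟩ := eventually_atTop.mp (hreg (δ/4) (by positivity))
      have hvtop : Tendsto (fun n => (1-δ) * R n) atTop atTop :=
        hRtop.const_mul_atTop (by linarith)
      filter_upwards [hRpos, hvtop.eventually_ge_atTop T0, hwsub (δ*α/8) (by positivity),
          eventually_ge_atTop 2] with n hRn hTn hwn h2n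
      have h2nr : (2:ℝ) ≤ (n:ℝ) := by exact_mod_cast h2n
      have hnpos : (0:ℝ) < (n:ℝ) := by linarith
      have hn1 : (1:ℝ) < (n:ℝ) := by linarith
      have hcn0 : 0 ≤ α * Real.log n := mul_nonneg hα.le (Real.log_nonneg (by linarith))
      have hβ : (0:ℝ) < 1 - δ/2 := by linarith
      have hs'lt : ((1-δ)/(1-δ/2)) * R n < R n := by
        have hfr : (1-δ)/(1-δ/2) < 1 := (div_lt_one hβ).mpr (by linarith)
        nlinarith
      have hs'0 : 0 ≤ ((1-δ)/(1-δ/2)) * R n :=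
        mul_nonneg (div_nonneg (by linarith) hβ.le) (hR0 n)
      have hs'nmem : rateFn μ X (((1-δ)/(1-δ/2)) * R n) < ((α * Real.log n : ℝ) : EReal) := by
        by_contra hcon
        push_neg at hcon
        have := hmemT n _ ⟨hs'0, hcon⟩
        linarith
      have hscale := rateFn_scale hX hsym (by linarith : (0:ℝ) ≤ 1 - δ/2)
        (by linarith : (1:ℝ) - δ/2 ≤ 1) hs'nmem.le
      have hvs : (1 - δ/2) * (((1-δ)/(1-δ/2)) * R n) = (1-δ) * R n := by
        have h2δ : (2:ℝ) - δ ≠ 0 := by linarith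
        field_simp
      rw [hvs] at hscale
      have hne_top : rateFn μ X ((1-δ) * R n) ≠ ⊤ := by
        intro h
        rw [h] at hscale
        exact absurd hscale (not_le.mpr (lt_of_lt_of_le (EReal.coe_lt_top _) le_rfl))
      have hne_bot : rateFn μ X ((1-δ) * R n) ≠ ⊥ := by
        intro h
        have h2 := rateFn_nonneg (μ := μ) (X := X) (t := (1-δ) * R n)
        rw [h] at h2
        simp at h2
      have hvr : rateFn μ X ((1-δ) * R n) = ((rateFn μ X ((1-δ) * R n)).toReal : EReal) :=
        (EReal.coe_toReal hne_top hne_bot).symm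
      set r := (rateFn μ X ((1-δ) * R n)).toReal with hrdef
      have hr0 : 0 ≤ r := by
        have h2 := rateFn_nonneg (μ := μ) (X := X) (t := (1-δ) * R n)
        rw [hvr] at h2
        exact_mod_cast h2
      have hrle : r ≤ (1 - δ/2) * (α * Real.log n) := by
        rw [hvr] at hscale
        have : ((r : ℝ) : EReal) ≤ (((1 - δ/2) * (α * Real.log n) : ℝ) : EReal) := hscale
        exact_mod_cast this
      have hlow := (hT0 ((1-δ) * R n) hTn r hvr).1
      calc w n * (n:ℝ)^(-α) < (n:ℝ)^(δ*α/8) * (n:ℝ)^(-α) :=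
            mul_lt_mul_of_pos_right hwn (Real.rpow_pos_of_pos hnpos _)
        _ = (n:ℝ)^(δ*α/8 - α) := by rw [← Real.rpow_add hnpos]; ring_nf
        _ < (n:ℝ)^(δ*α/4 - α) := by
            apply Real.rpow_lt_rpow_of_exponent_lt hn1
            nlinarith
        _ = Real.exp ((δ*α/4 - α) * Real.log n) := by
            rw [Real.rpow_def_of_pos hnpos]
            congr 1
            ring
        _ ≤ Real.exp (-(1+δ/4) * r) := by
            apply Real.exp_le_exp.mpr
            have h1 : (1+δ/4) * r ≤ (1+δ/4) * ((1-δ/2) * (α * Real.log n)) :=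
              mul_le_mul_of_nonneg_left hrle (by linarith)
            nlinarith [mul_nonneg (by positivity : (0:ℝ) ≤ δ^2/8) hcn0]
        _ ≤ (μ {ω | (1-δ) * R n < X ω}).toReal := hlow
  -- lower bound from key
  have keylb : ∀ δ : ℝ, 0 < δ → δ < 1 → ∀ᶠ n in atTop, (1-δ) * R n ≤ x n := by
    intro δ h0 h1
    filter_upwards [key δ h0 h1, hSne] with n hk hne'
    apply le_csInf hne'
    intro t ht
    by_contra hcon
    push_neg at hcon
    have hsub : {ω | (1-δ) * R n < X ω} ⊆ {ω | t < X ω} := by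
      intro ω hω
      simp only [Set.mem_setOf_eq] at hω ⊢
      linarith
    have hmono := ENNReal.toReal_mono (measure_ne_top μ {ω | t < X ω}) (measure_mono hsub)
    have ht2 := ht.2
    linarith
  -- define epsilon
  set ε : ℕ → ℝ := fun n => if 0 < R n then max 0 (1 - x n / R n) else 0 with hεdef
  have hε0 : ∀ n, 0 ≤ ε n := by
    intro n
    simp only [hεdef]
    split_ifs
    · exact le_max_left _ _
    · exact le_refl 0
  refine ⟨ε, ?_, ?_⟩
  · rw [Metric.tendsto_atTop]
    intro δ hδ
    have hδ'0 : 0 < min (δ/2) (1/2) := lt_min (by linarith) (by norm_num)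
    have hδ'1 : min (δ/2) (1/2) < 1 := lt_of_le_of_lt (min_le_right _ _) (by norm_num)
    have hδ'δ : min (δ/2) (1/2) < δ := lt_of_le_of_lt (min_le_left _ _) (by linarith)
    obtain ⟨N, hN⟩ := eventually_atTop.mp ((keylb _ hδ'0 hδ'1).and hRpos)
    refine ⟨N, fun n hn => ?_⟩
    obtain ⟨hk, hRn⟩ := hN n hn
    rw [Real.dist_eq, sub_zero, abs_of_nonneg (hε0 n)]
    simp only [hεdef]
    rw [if_pos hRn]
    apply max_lt hδ
    have hdiv : 1 - min (δ/2) (1/2) ≤ x n / R n := by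
      rw [le_div_iff₀ hRn]
      linarith
    linarith
  · have final : ∀ᶠ n in atTop, ((1 - ε n) * R n ≤ x n ∧ x n ≤ R n) := by
      filter_upwards [hRpos, hupper, hSne] with n hRn hup hne'
      refine ⟨?_, hup⟩
      have hxn : 0 ≤ x n := le_csInf hne' (fun t ht => ht.1.le)
      have hεn : ε n = max 0 (1 - x n / R n) := by
        simp only [hεdef]
        rw [if_pos hRn]
      rw [hεn]
      have h1 : 1 - max 0 (1 - x n / R n) ≤ x n / R n := by
        have := le_max_right 0 (1 - x n / R n)
        linarith
      calc (1 - max 0 (1 - x n / R n)) * R n ≤ (x n / R n) * R n :=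
            mul_le_mul_of_nonneg_right h1 (hR0 n)
        _ = x n := div_mul_cancel₀ _ (ne_of_gt hRn)
    simpa only [hxdef, hSdef, hRdef] using final


/-- Lemma on `x_n`: for a good random variable `X` which is not a.s. `0`,
`α > 0`, and a positive sequence `ω_n → ∞` with `ω_n = n^{o(1)}`, the quantile
`x_n = inf {t > 0 : P(X > t) ≤ ω_n n^{-α}}` satisfies, for all large `n`,
`(1 - o(1)) Λ*⁻¹(α log n) ≤ x_n ≤ Λ*⁻¹(α log n)`. -/
theorem quantile_asymptotics {Ω : Type*} [MeasurableSpace Ω] (μ : Measure Ω)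
    [IsProbabilityMeasure μ] (X : Ω → ℝ) (hX : Measurable X)
    (hgood : Good μ X) (hne : ¬ (∀ᵐ ω ∂μ, X ω = 0))
    (α : ℝ) (hα : 0 < α)
    (w : ℕ → ℝ) (hwpos : ∀ n, 0 < w n) (hwtop : Tendsto w atTop atTop)
    (hwsmall : Tendsto (fun n : ℕ => Real.log (w n) / Real.log n) atTop (nhds 0)) :
    ∃ ε : ℕ → ℝ, Tendsto ε atTop (nhds 0) ∧
      ∀ᶠ n : ℕ in atTop,
        (1 - ε n) * rateFnInv μ X (α * Real.log n) ≤
            sInf {t : ℝ | 0 < t ∧ (μ {ω | t < X ω}).toReal ≤ w n * (n : ℝ) ^ (-α)} ∧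
          sInf {t : ℝ | 0 < t ∧ (μ {ω | t < X ω}).toReal ≤ w n * (n : ℝ) ^ (-α)} ≤
            rateFnInv μ X (α * Real.log n) := by
  exact quantile_asymptotics' μ X hX hgood hne α hα w hwpos hwtop hwsmall
end

section
/- With i.i.d. good edge-weights on K_{n,n} and W_n the maximum weight of a perfect matching, we have W_n = (1 + o(1)) n Λ*⁻¹(log n) with high probability, i.e. for every ε > 0, P(|W_n − n Λ*⁻¹(log n)| > ε n Λ*⁻¹(log n)) → 0 as n → ∞. -/
open MeasureTheory ProbabilityTheory Real Filter

noncomputable section AuxLemmas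
set_option linter.unusedSectionVars false

open MeasureTheory ProbabilityTheory Real Filter

variable {Ω₀ : Type*} [MeasurableSpace Ω₀] {μ₀ : Measure Ω₀} [IsProbabilityMeasure μ₀]
  {ξ : Ω₀ → ℝ}

lemma integral_exp_symm (hξ : Measurable ξ) (hsym : SymmetricRV μ₀ ξ) (s : ℝ) :
    ∫ ω, Real.exp (s * ξ ω) ∂μ₀ = ∫ ω, Real.exp (-s * ξ ω) ∂μ₀ := by
  have hm : Measurable fun x : ℝ => Real.exp (s * x) := by fun_prop
  have h1 : ∫ ω, Real.exp (s * ξ ω) ∂μ₀ = ∫ x, Real.exp (s * x) ∂(Measure.map ξ μ₀) :=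
    (integral_map hξ.aemeasurable hm.aestronglyMeasurable).symm
  have h2 : ∫ x, Real.exp (s * x) ∂(Measure.map (fun ω => -ξ ω) μ₀)
      = ∫ ω, Real.exp (s * (-ξ ω)) ∂μ₀ :=
    integral_map hξ.neg.aemeasurable hm.aestronglyMeasurable
  rw [h1, hsym, h2]
  congr 1; ext ω; ring_nf

lemma integrable_exp_symm (hξ : Measurable ξ) (hsym : SymmetricRV μ₀ ξ) (s : ℝ)
    (h : Integrable (fun ω => Real.exp (s * ξ ω)) μ₀) :
    Integrable (fun ω => Real.exp (-s * ξ ω)) μ₀ := by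
  have hm : Measurable fun x : ℝ => Real.exp (s * x) := by fun_prop
  have h1 : Integrable (fun x => Real.exp (s * x)) (Measure.map ξ μ₀) := by
    rw [integrable_map_measure hm.aestronglyMeasurable
      hξ.aemeasurable]
    exact h
  rw [hsym, integrable_map_measure hm.aestronglyMeasurable
    (show Measurable (fun ω => -ξ ω) from hξ.neg).aemeasurable] at h1
  have heq : (fun ω => Real.exp (-s * ξ ω)) = ((fun x => Real.exp (s * x)) ∘ fun ω => -ξ ω) := by
    ext ω; simp [Function.comp, mul_neg, neg_mul]
  rw [heq]
  exact h1

lemma one_le_integral_exp (hξ : Measurable ξ) (hsym : SymmetricRV μ₀ ξ) (s : ℝ)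
    (h : Integrable (fun ω => Real.exp (s * ξ ω)) μ₀) :
    1 ≤ ∫ ω, Real.exp (s * ξ ω) ∂μ₀ := by
  have h' := integrable_exp_symm hξ hsym s h
  have key : (2:ℝ) ≤ ∫ ω, (Real.exp (s * ξ ω) + Real.exp (-s * ξ ω)) ∂μ₀ := by
    have : ∫ ω, (2:ℝ) ∂μ₀ ≤ ∫ ω, (Real.exp (s * ξ ω) + Real.exp (-s * ξ ω)) ∂μ₀ := by
      refine integral_mono (integrable_const 2) (h.add h') (fun ω => ?_)
      have a1 := Real.add_one_le_exp (s * ξ ω)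
      have a2 := Real.add_one_le_exp (-s * ξ ω)
      simp only [neg_mul] at a2 ⊢
      linarith
    simpa using this
  rw [integral_add h h', ← integral_exp_symm hξ hsym s] at key
  linarith

lemma lmgf_of_integrable {s : ℝ} (h : Integrable (fun ω => Real.exp (s * ξ ω)) μ₀) :
    lmgf μ₀ ξ s = ((Real.log (∫ ω, Real.exp (s * ξ ω) ∂μ₀) : ℝ) : EReal) := by
  rw [lmgf, if_pos h]

lemma lmgf_ne_top_iff {s : ℝ} :
    lmgf μ₀ ξ s ≠ ⊤ ↔ Integrable (fun ω => Real.exp (s * ξ ω)) μ₀ := by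
  constructor
  · intro h
    by_contra hint
    rw [lmgf, if_neg hint] at h
    exact h rfl
  · intro h
    rw [lmgf_of_integrable h]
    exact EReal.coe_ne_top _

lemma lmgf_nonneg_s9 (hξ : Measurable ξ) (hsym : SymmetricRV μ₀ ξ) (s : ℝ) :
    0 ≤ lmgf μ₀ ξ s := by
  by_cases h : Integrable (fun ω => Real.exp (s * ξ ω)) μ₀
  · rw [lmgf_of_integrable h]
    have := one_le_integral_exp hξ hsym s h
    have : (0:ℝ) ≤ Real.log (∫ ω, Real.exp (s * ξ ω) ∂μ₀) := Real.log_nonneg this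
    exact_mod_cast this
  · rw [lmgf, if_neg h]; exact le_top

lemma lmgf_zero_s9 : lmgf μ₀ ξ 0 = 0 := by
  have h : Integrable (fun ω => Real.exp ((0:ℝ) * ξ ω)) μ₀ := by
    simpa using (integrable_const (1:ℝ))
  rw [lmgf_of_integrable h]
  simp

lemma rateFn_term_le (s t : ℝ) :
    ((s * t : ℝ) : EReal) - lmgf μ₀ ξ s ≤ rateFn μ₀ ξ t :=
  le_iSup (fun s => ((s * t : ℝ) : EReal) - lmgf μ₀ ξ s) s

lemma rateFn_nonneg_s9 (t : ℝ) : 0 ≤ rateFn μ₀ ξ t := by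
  have := rateFn_term_le (μ₀ := μ₀) (ξ := ξ) 0 t
  rw [lmgf_zero_s9] at this
  simpa using this

lemma exists_term_gt {t : ℝ} {B : EReal} (h : B < rateFn μ₀ ξ t) :
    ∃ s : ℝ, B < ((s * t : ℝ) : EReal) - lmgf μ₀ ξ s := by
  rw [rateFn, lt_iSup_iff] at h
  exact h

lemma term_extract (hξ : Measurable ξ) (hsym : SymmetricRV μ₀ ξ) {s t b : ℝ}
    (h : (b : EReal) < ((s * t : ℝ) : EReal) - lmgf μ₀ ξ s) :
    ∃ r : ℝ, lmgf μ₀ ξ s = (r : EReal) ∧ 0 ≤ r ∧ b < s * t - r := by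
  have hne : lmgf μ₀ ξ s ≠ ⊤ := by
    intro htop
    rw [htop, EReal.sub_top] at h
    exact absurd h (by simp)
  have hnb : lmgf μ₀ ξ s ≠ ⊥ := by
    intro hb
    have := lmgf_nonneg_s9 hξ hsym s
    rw [hb] at this
    simp at this
  refine ⟨(lmgf μ₀ ξ s).toReal, (EReal.coe_toReal hne hnb).symm, ?_, ?_⟩
  · have := lmgf_nonneg_s9 hξ hsym s
    rw [← EReal.coe_toReal hne hnb] at this
    exact_mod_cast this
  · rw [← EReal.coe_toReal hne hnb, ← EReal.coe_sub, EReal.coe_lt_coe_iff] at h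
    exact h

end AuxLemmas
noncomputable section AuxLemmas2
set_option linter.unusedSectionVars false

open MeasureTheory ProbabilityTheory Real Filter

variable {Ω₀ : Type*} [MeasurableSpace Ω₀] {μ₀ : Measure Ω₀} [IsProbabilityMeasure μ₀]
  {ξ : Ω₀ → ℝ}

/-- Chernoff bound for a single variable. -/
lemma chernoff_single (hξ : Measurable ξ) {s r u : ℝ} (hs : 0 ≤ s)
    (hr : lmgf μ₀ ξ s = (r : EReal)) :
    (μ₀ {ω | u ≤ ξ ω}).toReal ≤ Real.exp (r - s * u) := by
  have hint : Integrable (fun ω => Real.exp (s * ξ ω)) μ₀ :=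
    lmgf_ne_top_iff.mp (by rw [hr]; exact EReal.coe_ne_top r)
  have hmgf : mgf ξ μ₀ s = ∫ ω, Real.exp (s * ξ ω) ∂μ₀ := rfl
  have hpos : 0 < ∫ ω, Real.exp (s * ξ ω) ∂μ₀ := by
    rw [← hmgf]; exact mgf_pos hint
  have hrlog : r = Real.log (∫ ω, Real.exp (s * ξ ω) ∂μ₀) := by
    rw [lmgf_of_integrable hint] at hr
    exact_mod_cast hr.symm
  calc (μ₀ {ω | u ≤ ξ ω}).toReal ≤ Real.exp (-s * u) * mgf ξ μ₀ s :=
        measure_ge_le_exp_mul_mgf u hs hint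
    _ = Real.exp (r - s * u) := by
        rw [hmgf, ← Real.exp_log hpos, ← Real.exp_add, ← hrlog]
        ring_nf

/-- If the rate function is finite at `v` then `P(ξ > u) > 0` for `u < v`. -/
lemma measure_gt_pos (hξ : Measurable ξ) (hsym : SymmetricRV μ₀ ξ) {u v : ℝ} (hu : 0 ≤ u)
    (huv : u < v) (hv : rateFn μ₀ ξ v ≠ ⊤) : 0 < μ₀ {ω | u < ξ ω} := by
  rcases eq_or_lt_of_le (zero_le : 0 ≤ μ₀ {ω | u < ξ ω}) with h0 | h; swap
  · exact h
  exfalso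
  have hae : ∀ᵐ ω ∂μ₀, ξ ω ≤ u := by
    refine (ae_iff).mpr ?_
    simpa [not_le] using h0.symm
  have hbound : ∀ s : ℝ, 0 ≤ s → lmgf μ₀ ξ s ≤ ((s * u : ℝ) : EReal) := by
    intro s hs
    have haeb : ∀ᵐ ω ∂μ₀, ‖Real.exp (s * ξ ω)‖ ≤ Real.exp (s * u) := by
      filter_upwards [hae] with ω hω
      rw [Real.norm_eq_abs, abs_of_pos (Real.exp_pos _), Real.exp_le_exp]
      exact mul_le_mul_of_nonneg_left hω hs
    have hint : Integrable (fun ω => Real.exp (s * ξ ω)) μ₀ :=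
      Integrable.mono' (integrable_const _) ((hξ.const_mul s).exp.aestronglyMeasurable) haeb
    rw [lmgf_of_integrable hint]
    have h1 : ∫ ω, Real.exp (s * ξ ω) ∂μ₀ ≤ Real.exp (s * u) := by
      have := integral_mono_ae hint (integrable_const _) (by
        filter_upwards [hae] with ω hω
        exact Real.exp_le_exp.mpr (mul_le_mul_of_nonneg_left hω hs))
      simpa using this
    have h2 : (0:ℝ) < ∫ ω, Real.exp (s * ξ ω) ∂μ₀ :=
      lt_of_lt_of_le one_pos (one_le_integral_exp hξ hsym s hint)
    have := (Real.log_le_iff_le_exp h2).mpr h1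
    exact_mod_cast this
  apply hv
  rw [EReal.eq_top_iff_forall_lt]
  intro y
  set s : ℝ := max 0 ((y + 1) / (v - u)) with hsdef
  have hs : 0 ≤ s := le_max_left _ _
  have key : (y : EReal) < ((s * v : ℝ) : EReal) - ((s * u : ℝ) : EReal) := by
    rw [← EReal.coe_sub, EReal.coe_lt_coe_iff]
    have : s * v - s * u = s * (v - u) := by ring
    rw [this]
    rcases le_or_gt 0 ((y + 1) / (v - u)) with hc | hc
    · have : s = (y + 1) / (v - u) := max_eq_right hc
      rw [this, div_mul_cancel₀ _ (by linarith : v - u ≠ 0)]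
      linarith
    · have hy : y + 1 < 0 := by
        by_contra hcon
        push_neg at hcon
        exact absurd (div_nonneg hcon (by linarith)) (not_le.mpr hc)
      have : s = 0 := max_eq_left hc.le
      rw [this]
      linarith
  refine lt_of_lt_of_le key ?_
  refine le_trans ?_ (rateFn_term_le s v)
  exact EReal.sub_le_sub le_rfl (hbound s hs)

/-- The set defining `rateFnInv` is nonempty. -/
lemma rateFnInv_set_nonempty (hξ : Measurable ξ) (hsym : SymmetricRV μ₀ ξ)
    (hfin : FiniteLmgfNearZero μ₀ ξ) (c : ℝ) :
    {s : ℝ | 0 ≤ s ∧ (c : EReal) ≤ rateFn μ₀ ξ s}.Nonempty := by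
  obtain ⟨δ, hδ, hδfin⟩ := hfin
  have hs0 : lmgf μ₀ ξ (δ/2) ≠ ⊤ := hδfin (δ/2) (by rw [abs_of_pos (by linarith)]; linarith)
  have hint : Integrable (fun ω => Real.exp ((δ/2) * ξ ω)) μ₀ := lmgf_ne_top_iff.mp hs0
  set r₀ : ℝ := Real.log (∫ ω, Real.exp ((δ/2) * ξ ω) ∂μ₀) with hr₀
  have hco : lmgf μ₀ ξ (δ/2) = (r₀ : EReal) := lmgf_of_integrable hint
  refine ⟨max 0 ((c + r₀) / (δ/2)), le_max_left _ _, ?_⟩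
  refine le_trans ?_ (rateFn_term_le (δ/2) _)
  rw [hco, ← EReal.coe_sub, EReal.coe_le_coe_iff]
  have h1 : (c + r₀) / (δ/2) ≤ max 0 ((c + r₀) / (δ/2)) := le_max_right _ _
  have h2 : (δ/2) * ((c + r₀) / (δ/2)) = c + r₀ := mul_div_cancel₀ _ (by linarith)
  nlinarith [mul_le_mul_of_nonneg_left h1 (by linarith : (0:ℝ) ≤ δ/2)]

lemma rateFnInv_nonneg (c : ℝ) : 0 ≤ rateFnInv μ₀ ξ c :=
  Real.sInf_nonneg (fun _ hx => hx.1)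

lemma rateFnInv_le_of_mem {c v : ℝ} (hv : 0 ≤ v ∧ (c : EReal) ≤ rateFn μ₀ ξ v) :
    rateFnInv μ₀ ξ c ≤ v :=
  csInf_le ⟨0, fun _ hx => hx.1⟩ hv

lemma rateFnInv_exists_near (hξ : Measurable ξ) (hsym : SymmetricRV μ₀ ξ)
    (hfin : FiniteLmgfNearZero μ₀ ξ) (c : ℝ) {η : ℝ} (hη : 0 < η) :
    ∃ v, (0 ≤ v ∧ (c : EReal) ≤ rateFn μ₀ ξ v) ∧ rateFnInv μ₀ ξ c ≤ v ∧
      v < rateFnInv μ₀ ξ c + η := by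
  obtain ⟨v, hv, hlt⟩ := Real.lt_sInf_add_pos (rateFnInv_set_nonempty hξ hsym hfin c) hη
  exact ⟨v, hv, rateFnInv_le_of_mem hv, hlt⟩

lemma rateFn_lt_of_lt_inv {c v : ℝ} (hv : 0 ≤ v) (h : v < rateFnInv μ₀ ξ c) :
    rateFn μ₀ ξ v < (c : EReal) := by
  by_contra hcon
  push_neg at hcon
  exact absurd (rateFnInv_le_of_mem ⟨hv, hcon⟩) (not_le.mpr h)

/-- Sub-homogeneity: `Λ*(c·t) ≤ c·R` when `Λ*(t) ≤ R`, `0 ≤ c ≤ 1`. -/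
lemma rateFn_smul_le (hξ : Measurable ξ) (hsym : SymmetricRV μ₀ ξ) {c R t : ℝ}
    (hc0 : 0 ≤ c) (hc1 : c ≤ 1) (h : rateFn μ₀ ξ t ≤ (R : EReal)) :
    rateFn μ₀ ξ (c * t) ≤ ((c * R : ℝ) : EReal) := by
  refine iSup_le fun s => ?_
  by_cases hs : Integrable (fun ω => Real.exp (s * ξ ω)) μ₀
  · have hco := lmgf_of_integrable (ξ := ξ) hs
    set r : ℝ := Real.log (∫ ω, Real.exp (s * ξ ω) ∂μ₀) with hrdef
    have hr0 : 0 ≤ r := Real.log_nonneg (one_le_integral_exp hξ hsym s hs)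
    have hterm : s * t - r ≤ R := by
      have := le_trans (rateFn_term_le s t) h
      rw [hco, ← EReal.coe_sub, EReal.coe_le_coe_iff] at this
      exact this
    rw [hco, ← EReal.coe_sub, EReal.coe_le_coe_iff]
    nlinarith
  · rw [lmgf, if_neg hs, EReal.sub_top]
    exact bot_le
end AuxLemmas2
noncomputable section AuxLemmas3
set_option linter.unusedSectionVars false

open MeasureTheory ProbabilityTheory Real Filter

variable {Ω₀ : Type*} [MeasurableSpace Ω₀] {μ₀ : Measure Ω₀} [IsProbabilityMeasure μ₀]
  {ξ : Ω₀ → ℝ} {Ω : Type*} [MeasurableSpace Ω] {μ : Measure Ω} {Y : Ω → ℝ}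

lemma identDistrib_measure_preimage (h : IdentDistrib Y ξ μ μ₀) {A : Set ℝ}
    (hA : MeasurableSet A) : μ (Y ⁻¹' A) = μ₀ (ξ ⁻¹' A) := by
  rw [← Measure.map_apply_of_aemeasurable h.aemeasurable_fst hA,
    ← Measure.map_apply_of_aemeasurable h.aemeasurable_snd hA, h.map_eq]

lemma identDistrib_mgf (h : IdentDistrib Y ξ μ μ₀) (s : ℝ) : mgf Y μ s = mgf ξ μ₀ s := by
  have hm : Measurable fun x : ℝ => Real.exp (s * x) := by fun_prop
  exact (h.comp hm).integral_eq

lemma identDistrib_integrable_exp (h : IdentDistrib Y ξ μ μ₀) (s : ℝ)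
    (hi : Integrable (fun ω => Real.exp (s * ξ ω)) μ₀) :
    Integrable (fun ω => Real.exp (s * Y ω)) μ := by
  have hm : Measurable fun x : ℝ => Real.exp (s * x) := by fun_prop
  exact ((h.comp hm).integrable_iff).mpr hi

lemma lmgf_degenerate [IsProbabilityMeasure μ₀] (hdeg : ∀ᵐ ω ∂μ₀, ξ ω = 0) (s : ℝ) :
    lmgf μ₀ ξ s = 0 := by
  have hae : (fun ω => Real.exp (s * ξ ω)) =ᵐ[μ₀] (fun _ => (1:ℝ)) := by
    filter_upwards [hdeg] with ω hω; simp [hω]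
  have hint : Integrable (fun ω => Real.exp (s * ξ ω)) μ₀ :=
    (integrable_const (1:ℝ)).congr hae.symm
  rw [lmgf_of_integrable hint, integral_congr_ae hae]
  simp

lemma rateFn_degenerate (hdeg : ∀ᵐ ω ∂μ₀, ξ ω = 0) {t : ℝ} (ht : 0 < t) :
    rateFn μ₀ ξ t = ⊤ := by
  rw [EReal.eq_top_iff_forall_lt]
  intro y
  refine lt_of_lt_of_le ?_ (rateFn_term_le ((y+1)/t) t)
  rw [lmgf_degenerate hdeg, sub_zero, EReal.coe_lt_coe_iff, div_mul_cancel₀ _ ht.ne']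
  linarith

lemma rateFnInv_degenerate (hdeg : ∀ᵐ ω ∂μ₀, ξ ω = 0) (c : ℝ) :
    rateFnInv μ₀ ξ c = 0 := by
  refine le_antisymm ?_ (rateFnInv_nonneg c)
  by_contra hcon
  push_neg at hcon
  have hhalf : rateFnInv μ₀ ξ c ≤ rateFnInv μ₀ ξ c / 2 := by
    refine rateFnInv_le_of_mem ⟨by linarith, ?_⟩
    rw [rateFn_degenerate hdeg (by linarith)]
    exact le_top
  linarith

end AuxLemmas3
noncomputable section AuxUpper
set_option linter.unusedSectionVars false

open MeasureTheory ProbabilityTheory Real Filter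
open scoped ENNReal NNReal

variable {Ω₀ : Type*} [MeasurableSpace Ω₀] {μ₀ : Measure Ω₀} [IsProbabilityMeasure μ₀]
  {ξ : Ω₀ → ℝ} {Ω : Type*} [MeasurableSpace Ω] {μ : Measure Ω} [IsProbabilityMeasure μ]

lemma perm_sum_eq {n : ℕ} (X : Fin n × Fin n → Ω → ℝ) (σ : Equiv.Perm (Fin n)) :
    (fun ω => ∑ i, X (i, σ i) ω)
      = ∑ e ∈ Finset.univ.image (fun i : Fin n => (i, σ i)), X e := by
  have hinj : Function.Injective (fun i : Fin n => (i, σ i)) := by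
    intro a b hab
    simpa using congrArg Prod.fst hab
  ext ω
  rw [Finset.sum_apply]
  rw [Finset.sum_image (fun a _ b _ h => hinj h)]

lemma chernoff_perm {n : ℕ} (X : Fin n × Fin n → Ω → ℝ)
    (hmeas : ∀ e, Measurable (X e))
    (hind : iIndepFun X μ)
    (hid : ∀ e, IdentDistrib (X e) ξ μ μ₀)
    {s r a : ℝ} (hs : 0 ≤ s) (hr : lmgf μ₀ ξ s = (r : EReal)) (σ : Equiv.Perm (Fin n)) :
    μ {ω | (n:ℝ) * a ≤ ∑ i, X (i, σ i) ω}
      ≤ ENNReal.ofReal (Real.exp (-(n:ℝ) * (s * a - r))) := by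
  classical
  have hintξ : Integrable (fun ω => Real.exp (s * ξ ω)) μ₀ :=
    lmgf_ne_top_iff.mp (by rw [hr]; exact EReal.coe_ne_top r)
  set M : Finset (Fin n × Fin n) := Finset.univ.image (fun i : Fin n => (i, σ i)) with hM
  have hcard : M.card = n := by
    rw [hM, Finset.card_image_of_injective _ (fun a b hab => by
      simpa using congrArg Prod.fst hab)]
    simp
  have hint : ∀ e ∈ M, Integrable (fun ω => Real.exp (s * X e ω)) μ :=
    fun e _ => identDistrib_integrable_exp (hid e) s hintξ
  have hintS : Integrable (fun ω => Real.exp (s * (∑ e ∈ M, X e) ω)) μ :=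
    hind.integrable_exp_mul_sum hmeas hint
  have hmgfξ : mgf ξ μ₀ s = Real.exp r := by
    have : (r : EReal) = ((Real.log (∫ ω, Real.exp (s * ξ ω) ∂μ₀) : ℝ) : EReal) := by
      rw [← hr, lmgf_of_integrable hintξ]
    have hlog : r = Real.log (∫ ω, Real.exp (s * ξ ω) ∂μ₀) := by exact_mod_cast this
    have hpos : 0 < ∫ ω, Real.exp (s * ξ ω) ∂μ₀ := mgf_pos hintξ
    rw [hlog, Real.exp_log hpos]; rfl
  have hmgf : mgf (∑ e ∈ M, X e) μ s = Real.exp ((n:ℝ) * r) := by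
    rw [hind.mgf_sum hmeas M]
    have : ∀ e ∈ M, mgf (X e) μ s = Real.exp r := fun e _ => by
      rw [identDistrib_mgf (hid e) s, hmgfξ]
    rw [Finset.prod_congr rfl this, Finset.prod_const, hcard, ← Real.exp_nat_mul]
  have hcher := measure_ge_le_exp_mul_mgf (X := ∑ e ∈ M, X e) (μ := μ) ((n:ℝ) * a) hs hintS
  rw [hmgf, ← Real.exp_add] at hcher
  have hev : {ω | (n:ℝ) * a ≤ ∑ i, X (i, σ i) ω}
      = {ω | (n:ℝ) * a ≤ (∑ e ∈ M, X e) ω} := by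
    have := perm_sum_eq X σ
    ext ω
    simp only [Set.mem_setOf_eq, ← hM]
    rw [← congrFun this ω]
  rw [hev]
  calc μ {ω | (n:ℝ) * a ≤ (∑ e ∈ M, X e) ω}
      = ENNReal.ofReal ((μ {ω | (n:ℝ) * a ≤ (∑ e ∈ M, X e) ω}).toReal) :=
        (ENNReal.ofReal_toReal (measure_ne_top _ _)).symm
    _ ≤ ENNReal.ofReal (Real.exp (-s * ((n:ℝ) * a) + (n:ℝ) * r)) := ENNReal.ofReal_le_ofReal hcher
    _ = ENNReal.ofReal (Real.exp (-(n:ℝ) * (s * a - r))) := by ring_nf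

lemma upper_bound_n {n : ℕ} (X : Fin n × Fin n → Ω → ℝ)
    (hmeas : ∀ e, Measurable (X e))
    (hind : iIndepFun X μ)
    (hid : ∀ e, IdentDistrib (X e) ξ μ μ₀)
    {s r a : ℝ} (hs : 0 ≤ s) (hr : lmgf μ₀ ξ s = (r : EReal)) :
    μ {ω | (n:ℝ) * a < ⨆ σ : Equiv.Perm (Fin n), ∑ i, X (i, σ i) ω}
      ≤ ENNReal.ofReal ((n:ℝ)^n * Real.exp (-(n:ℝ) * (s * a - r))) := by
  classical
  have hsub : {ω | (n:ℝ) * a < ⨆ σ : Equiv.Perm (Fin n), ∑ i, X (i, σ i) ω}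
      ⊆ ⋃ σ ∈ (Finset.univ : Finset (Equiv.Perm (Fin n))),
          {ω | (n:ℝ) * a ≤ ∑ i, X (i, σ i) ω} := by
    intro ω hω
    simp only [Set.mem_setOf_eq] at hω
    have hbdd : BddAbove (Set.range fun σ : Equiv.Perm (Fin n) => ∑ i, X (i, σ i) ω) :=
      Set.Finite.bddAbove (Set.finite_range _)
    obtain ⟨σ, hσ⟩ := (lt_ciSup_iff hbdd).mp hω
    simp only [Set.mem_iUnion]
    exact ⟨σ, Finset.mem_univ σ, hσ.le⟩
  have h1 : μ {ω | (n:ℝ) * a < ⨆ σ : Equiv.Perm (Fin n), ∑ i, X (i, σ i) ω}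
      ≤ ∑ σ : Equiv.Perm (Fin n), μ {ω | (n:ℝ) * a ≤ ∑ i, X (i, σ i) ω} :=
    le_trans (measure_mono hsub) (measure_biUnion_finset_le _ _)
  refine h1.trans ?_
  calc (∑ σ : Equiv.Perm (Fin n), μ {ω | (n:ℝ) * a ≤ ∑ i, X (i, σ i) ω})
      ≤ ∑ _σ : Equiv.Perm (Fin n), ENNReal.ofReal (Real.exp (-(n:ℝ) * (s * a - r))) :=
        Finset.sum_le_sum (fun σ _ => chernoff_perm X hmeas hind hid hs hr σ)
    _ = (Fintype.card (Equiv.Perm (Fin n)) : ℝ≥0∞)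
          * ENNReal.ofReal (Real.exp (-(n:ℝ) * (s * a - r))) := by
        rw [Finset.sum_const, Finset.card_univ, nsmul_eq_mul]
    _ ≤ ENNReal.ofReal ((n:ℝ)^n * Real.exp (-(n:ℝ) * (s * a - r))) := by
        rw [← ENNReal.ofReal_natCast (Fintype.card (Equiv.Perm (Fin n))),
          ← ENNReal.ofReal_mul (by positivity)]
        refine ENNReal.ofReal_le_ofReal ?_
        refine mul_le_mul_of_nonneg_right ?_ (Real.exp_pos _).le
        rw [Fintype.card_perm, Fintype.card_fin]
        calc ((Nat.factorial n : ℕ) : ℝ) ≤ ((n ^ n : ℕ) : ℝ) := by exact_mod_cast Nat.factorial_le_pow n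
          _ = (n:ℝ)^n := by push_cast; ring

end AuxUpper
noncomputable section AuxHall
set_option linter.unusedSectionVars false

open MeasureTheory ProbabilityTheory Real Filter
open scoped ENNReal NNReal

variable {Ω₀ : Type*} [MeasurableSpace Ω₀] {μ₀ : Measure Ω₀} [IsProbabilityMeasure μ₀]
  {ξ : Ω₀ → ℝ} {Ω : Type*} [MeasurableSpace Ω] {μ : Measure Ω} [IsProbabilityMeasure μ]

lemma nat_choose_le_pow_min {n k : ℕ} (hn : 1 ≤ n) (hk : k ≤ n) :
    n.choose k ≤ n ^ (min k (n - k)) := by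
  rcases le_total k (n - k) with h | h
  · rw [min_eq_left h]; exact Nat.choose_le_pow n k
  · rw [min_eq_right h]
    calc n.choose k = n.choose (n - k) := (Nat.choose_symm hk).symm
      _ ≤ n ^ (n - k) := Nat.choose_le_pow n (n - k)

/-- Probability that no perfect matching of `u`-heavy edges exists. -/
lemma hall_fail_bound {n : ℕ} (hn : 1 ≤ n) (hξ : Measurable ξ)
    (X : Fin n × Fin n → Ω → ℝ)
    (hmeas : ∀ e, Measurable (X e))
    (hind : iIndepFun X μ)
    (hid : ∀ e, IdentDistrib (X e) ξ μ μ₀)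
    (u : ℝ)
    (hD0 : 0 ≤ (n:ℝ) * (μ₀ {ω | u < ξ ω}).toReal / 2 - 2 * Real.log n) :
    μ {ω | ¬ ∃ σ : Equiv.Perm (Fin n), ∀ i, u < X (i, σ i) ω}
      ≤ ENNReal.ofReal ((n:ℝ) *
          Real.exp (-((n:ℝ) * (μ₀ {ω | u < ξ ω}).toReal / 2 - 2 * Real.log n))) := by
  classical
  set p : ℝ := (μ₀ {ω | u < ξ ω}).toReal with hp
  set D : ℝ := (n:ℝ) * p / 2 - 2 * Real.log n with hDdef
  have hp0 : 0 ≤ p := ENNReal.toReal_nonneg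
  have hp1 : p ≤ 1 := by
    rw [hp]
    exact ENNReal.toReal_le_of_le_ofReal zero_le_one (by simpa using prob_le_one)
  -- the neighbourhood finsets
  set Nbr : Ω → Fin n → Finset (Fin n) :=
    fun ω i => Finset.univ.filter (fun j => u < X (i, j) ω) with hNbr
  -- events
  set E : Finset (Fin n) → Finset (Fin n) → Set Ω :=
    fun A B => ⋂ e ∈ A ×ˢ Bᶜ, X e ⁻¹' (Set.Iic u) with hE
  -- inclusion into the union
  have hsub : {ω | ¬ ∃ σ : Equiv.Perm (Fin n), ∀ i, u < X (i, σ i) ω}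
      ⊆ ⋃ a ∈ Finset.Icc 1 n, ⋃ A ∈ Finset.powersetCard a (Finset.univ : Finset (Fin n)),
          ⋃ B ∈ Finset.powersetCard (a - 1) (Finset.univ : Finset (Fin n)), E A B := by
    intro ω hω
    simp only [Set.mem_setOf_eq] at hω
    -- Hall's condition must fail
    have hhall : ¬ ∀ A : Finset (Fin n), A.card ≤ (A.biUnion (Nbr ω)).card := by
      intro hcon
      obtain ⟨f, hfinj, hfmem⟩ :=
        (Finset.all_card_le_biUnion_card_iff_exists_injective (Nbr ω)).mp hcon
      have hfbij : Function.Bijective f := Finite.injective_iff_bijective.mp hfinj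
      refine hω ⟨Equiv.ofBijective f hfbij, fun i => ?_⟩
      have := hfmem i
      rw [hNbr] at this
      simp only [Finset.mem_filter] at this
      exact this.2
    push_neg at hhall
    obtain ⟨A, hA⟩ := hhall
    set a := A.card with ha
    have ha1 : 1 ≤ a := by
      by_contra hcon
      have : a = 0 := by omega
      rw [this] at hA
      omega
    have han : a ≤ n := by
      have := Finset.card_le_univ A
      simpa [ha] using this
    have hb : (A.biUnion (Nbr ω)).card ≤ a - 1 := by omega
    obtain ⟨B, hBsub, hBcard⟩ := Finset.exists_superset_card_eq hb (by simp only [Fintype.card_fin]; omega)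
    simp only [Set.mem_iUnion]
    refine ⟨a, Finset.mem_Icc.mpr ⟨ha1, han⟩, A, ?_, B, ?_, ?_⟩
    · rw [Finset.mem_powersetCard_univ]
    · rw [Finset.mem_powersetCard_univ]; exact hBcard
    · rw [hE]
      simp only [Set.mem_iInter]
      rintro ⟨i, j⟩ hij
      rw [Finset.mem_product] at hij
      obtain ⟨hi, hj⟩ := hij
      simp only [Finset.mem_compl] at hj
      have hjnot : j ∉ Nbr ω i := fun hmem => hj (hBsub (Finset.mem_biUnion.mpr ⟨i, hi, hmem⟩))
      rw [hNbr] at hjnot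
      simp only [Finset.mem_filter, Finset.mem_univ, true_and, not_lt] at hjnot
      exact hjnot
  refine le_trans (measure_mono hsub) ?_
  -- measure of each elementary event
  have hq : ∀ e : Fin n × Fin n, μ (X e ⁻¹' (Set.Iic u)) ≤ ENNReal.ofReal (Real.exp (-p)) := by
    intro e
    rw [identDistrib_measure_preimage (hid e) measurableSet_Iic]
    have hset : ξ ⁻¹' (Set.Iic u) = {ω | u < ξ ω}ᶜ := by
      ext ω; simp [not_lt]
    have hms : MeasurableSet {ω | u < ξ ω} := hξ measurableSet_Ioi
    rw [hset, measure_compl hms (measure_ne_top _ _), measure_univ]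
    have htr : ((1:ℝ≥0∞) - μ₀ {ω | u < ξ ω}).toReal = 1 - p := by
      rw [ENNReal.toReal_sub_of_le (by simpa using prob_le_one) ENNReal.one_ne_top]
      simp [hp]
    calc (1:ℝ≥0∞) - μ₀ {ω | u < ξ ω}
        = ENNReal.ofReal (1 - p) := by
          rw [← htr, ENNReal.ofReal_toReal]
          exact ne_top_of_le_ne_top ENNReal.one_ne_top tsub_le_self
      _ ≤ ENNReal.ofReal (Real.exp (-p)) := by
          refine ENNReal.ofReal_le_ofReal ?_
          have := Real.add_one_le_exp (-p)
          linarith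
  -- bound on the elementary events
  have hEbound : ∀ (k : ℕ) (A B : Finset (Fin n)), (A ×ˢ Bᶜ).card = k →
      μ (E A B) ≤ ENNReal.ofReal (Real.exp (-(k:ℝ) * p)) := by
    intro k A B hk
    have hprod : μ (E A B) = ∏ e ∈ A ×ˢ Bᶜ, μ (X e ⁻¹' (Set.Iic u)) := by
      rw [hE]
      exact hind.measure_inter_preimage_eq_mul (A ×ˢ Bᶜ) (sets := fun _ => Set.Iic u)
        (fun _ _ => measurableSet_Iic)
    rw [hprod]
    calc (∏ e ∈ A ×ˢ Bᶜ, μ (X e ⁻¹' (Set.Iic u)))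
        ≤ ∏ _e ∈ A ×ˢ Bᶜ, ENNReal.ofReal (Real.exp (-p)) :=
          Finset.prod_le_prod' (fun e _ => hq e)
      _ = ENNReal.ofReal (Real.exp (-p)) ^ k := by rw [Finset.prod_const, hk]
      _ = ENNReal.ofReal (Real.exp (-p) ^ k) := (ENNReal.ofReal_pow (Real.exp_pos _).le k).symm
      _ = ENNReal.ofReal (Real.exp (-(k:ℝ) * p)) := by
          rw [← Real.exp_nat_mul]
          ring_nf
  -- per-cardinality bound
  have hper : ∀ a ∈ Finset.Icc 1 n,
      μ (⋃ A ∈ Finset.powersetCard a (Finset.univ : Finset (Fin n)),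
          ⋃ B ∈ Finset.powersetCard (a - 1) (Finset.univ : Finset (Fin n)), E A B)
        ≤ ENNReal.ofReal (Real.exp (-D)) := by
    intro a ha
    obtain ⟨ha1, han⟩ := Finset.mem_Icc.mp ha
    set k : ℕ := a * (n - (a - 1)) with hkdef
    have hcardAB : ∀ A B : Finset (Fin n), A ∈ Finset.powersetCard a Finset.univ →
        B ∈ Finset.powersetCard (a - 1) Finset.univ → (A ×ˢ Bᶜ).card = k := by
      intro A B hA hB
      rw [Finset.mem_powersetCard_univ] at hA hB
      rw [Finset.card_product, hA, Finset.card_compl, hB, Fintype.card_fin]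
    have step1 : μ (⋃ A ∈ Finset.powersetCard a (Finset.univ : Finset (Fin n)),
          ⋃ B ∈ Finset.powersetCard (a - 1) (Finset.univ : Finset (Fin n)), E A B)
        ≤ (n.choose a : ℝ≥0∞) * ((n.choose (a-1) : ℝ≥0∞)
            * ENNReal.ofReal (Real.exp (-(k:ℝ) * p))) := by
      refine le_trans (measure_biUnion_finset_le _ _) ?_
      have hinner : ∀ A ∈ Finset.powersetCard a (Finset.univ : Finset (Fin n)),
          μ (⋃ B ∈ Finset.powersetCard (a - 1) (Finset.univ : Finset (Fin n)), E A B)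
            ≤ (n.choose (a-1) : ℝ≥0∞) * ENNReal.ofReal (Real.exp (-(k:ℝ) * p)) := by
        intro A hA
        refine le_trans (measure_biUnion_finset_le _ _) ?_
        refine le_trans (Finset.sum_le_sum
          (fun B hB => hEbound k A B (hcardAB A B hA hB))) ?_
        rw [Finset.sum_const, Finset.card_powersetCard, Finset.card_univ, Fintype.card_fin,
          nsmul_eq_mul]
      refine le_trans (Finset.sum_le_sum hinner) ?_
      rw [Finset.sum_const, Finset.card_powersetCard, Finset.card_univ, Fintype.card_fin,
        nsmul_eq_mul]
    refine step1.trans ?_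
    -- now the real-number estimate
    set m : ℕ := min a (n + 1 - a) with hmdef
    have hm1 : 1 ≤ m := by omega
    have hchoose1 : (n.choose a : ℝ) ≤ (n:ℝ) ^ m := by
      have h1 : n.choose a ≤ n ^ (min a (n - a)) := nat_choose_le_pow_min hn han
      have h2 : n ^ (min a (n - a)) ≤ n ^ m :=
        Nat.pow_le_pow_right hn (by omega)
      calc (n.choose a : ℝ) ≤ ((n ^ m : ℕ) : ℝ) := by exact_mod_cast h1.trans h2
        _ = (n:ℝ) ^ m := by push_cast; ring
    have hchoose2 : (n.choose (a-1) : ℝ) ≤ (n:ℝ) ^ m := by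
      have h1 : n.choose (a-1) ≤ n ^ (min (a-1) (n - (a-1))) :=
        nat_choose_le_pow_min hn (by omega)
      have h2 : n ^ (min (a-1) (n - (a-1))) ≤ n ^ m :=
        Nat.pow_le_pow_right hn (by omega)
      calc (n.choose (a-1) : ℝ) ≤ ((n ^ m : ℕ) : ℝ) := by exact_mod_cast h1.trans h2
        _ = (n:ℝ) ^ m := by push_cast; ring
    have hkm : m * n ≤ 2 * k := by
      have hk' : k = a * (n + 1 - a) := by
        have : n - (a - 1) = n + 1 - a := by omega
        rw [hkdef, this]
      rcases le_total a (n + 1 - a) with hc | hc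
      · have hm : m = a := min_eq_left hc
        have : n ≤ 2 * (n + 1 - a) := by omega
        calc m * n = a * n := by rw [hm]
          _ ≤ a * (2 * (n + 1 - a)) := Nat.mul_le_mul_left a this
          _ = 2 * (a * (n + 1 - a)) := by ring
          _ = 2 * k := by rw [← hk']
      · have hm : m = n + 1 - a := min_eq_right hc
        have : n ≤ 2 * a := by omega
        calc m * n = (n + 1 - a) * n := by rw [hm]
          _ ≤ (n + 1 - a) * (2 * a) := Nat.mul_le_mul_left _ this
          _ = 2 * (a * (n + 1 - a)) := by ring
          _ = 2 * k := by rw [← hk']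
    have hpow : (n:ℝ) ^ m = Real.exp ((m:ℝ) * Real.log n) := by
      have hnpos : (0:ℝ) < (n:ℝ) ^ m := by positivity
      rw [← Real.exp_log hnpos, Real.log_pow]
    have hreal : (n.choose a : ℝ) * ((n.choose (a-1) : ℝ) * Real.exp (-(k:ℝ) * p))
        ≤ Real.exp (-D) := by
      have hkp : (m:ℝ) * ((n:ℝ) * p) / 2 ≤ (k:ℝ) * p := by
        have : ((m * n : ℕ) : ℝ) ≤ ((2 * k : ℕ) : ℝ) := by exact_mod_cast hkm
        push_cast at this
        nlinarith
      calc (n.choose a : ℝ) * ((n.choose (a-1) : ℝ) * Real.exp (-(k:ℝ) * p))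
          ≤ (n:ℝ) ^ m * ((n:ℝ) ^ m * Real.exp (-(k:ℝ) * p)) := by
            have he : (0:ℝ) ≤ Real.exp (-(k:ℝ) * p) := (Real.exp_pos _).le
            have c0 : (0:ℝ) ≤ (n.choose (a-1) : ℝ) := Nat.cast_nonneg _
            have c2 : (0:ℝ) ≤ (n:ℝ) ^ m := by positivity
            exact mul_le_mul hchoose1 (mul_le_mul_of_nonneg_right hchoose2 he)
              (mul_nonneg c0 he) c2
        _ = Real.exp ((m:ℝ) * Real.log n + ((m:ℝ) * Real.log n + -(k:ℝ) * p)) := by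
            rw [hpow, ← Real.exp_add, ← Real.exp_add]
        _ ≤ Real.exp (-(m:ℝ) * D) := by
            rw [Real.exp_le_exp, hDdef]
            nlinarith
        _ ≤ Real.exp (-D) := by
            rw [Real.exp_le_exp]
            have hm1' : (1:ℝ) ≤ (m:ℝ) := by exact_mod_cast hm1
            nlinarith
    calc (n.choose a : ℝ≥0∞) * ((n.choose (a-1) : ℝ≥0∞)
            * ENNReal.ofReal (Real.exp (-(k:ℝ) * p)))
        = ENNReal.ofReal ((n.choose a : ℝ) * ((n.choose (a-1) : ℝ)
            * Real.exp (-(k:ℝ) * p))) := by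
          rw [ENNReal.ofReal_mul (Nat.cast_nonneg _), ENNReal.ofReal_mul (Nat.cast_nonneg _),
            ENNReal.ofReal_natCast, ENNReal.ofReal_natCast]
      _ ≤ ENNReal.ofReal (Real.exp (-D)) := ENNReal.ofReal_le_ofReal hreal
  refine le_trans (measure_biUnion_finset_le _ _) ?_
  refine le_trans (Finset.sum_le_sum hper) ?_
  rw [Finset.sum_const, Nat.card_Icc, nsmul_eq_mul]
  simp only [Nat.add_sub_cancel]
  rw [← ENNReal.ofReal_natCast n, ← ENNReal.ofReal_mul (Nat.cast_nonneg _)]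
end AuxHall
noncomputable section AuxNondeg
set_option linter.unusedSectionVars false

open MeasureTheory ProbabilityTheory Real Filter
open scoped ENNReal NNReal

variable {Ω₀ : Type*} [MeasurableSpace Ω₀] {μ₀ : Measure Ω₀} [IsProbabilityMeasure μ₀]
  {ξ : Ω₀ → ℝ}

/-- In the nondegenerate case, `ξ` exceeds some positive level with positive probability. -/
lemma exists_pos_level (hξ : Measurable ξ) (hsym : SymmetricRV μ₀ ξ)
    (hne : ¬ ∀ᵐ ω ∂μ₀, ξ ω = 0) :
    ∃ v₀ : ℝ, 0 < v₀ ∧ 0 < μ₀ {ω | v₀ < ξ ω} := by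
  have h1 : μ₀ {ω | ξ ω ≠ 0} ≠ 0 := by
    intro hcon
    exact hne (by rw [ae_iff]; simpa using hcon)
  have hneg_eq : μ₀ {ω | ξ ω < 0} = μ₀ {ω | 0 < ξ ω} := by
    have e1 : μ₀ {ω | ξ ω < 0} = μ₀ (ξ ⁻¹' (Set.Iio 0)) := rfl
    have e2 : μ₀ {ω | 0 < ξ ω} = μ₀ ((fun ω => -ξ ω) ⁻¹' (Set.Iio 0)) := by
      congr 1; ext ω; simp
    rw [e1, e2, ← Measure.map_apply_of_aemeasurable hξ.aemeasurable measurableSet_Iio,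
      ← Measure.map_apply_of_aemeasurable (show Measurable (fun ω => -ξ ω) from hξ.neg).aemeasurable measurableSet_Iio, hsym]
  have hpos : μ₀ {ω | 0 < ξ ω} ≠ 0 := by
    intro hcon
    apply h1
    have hsub : {ω | ξ ω ≠ 0} ⊆ {ω | 0 < ξ ω} ∪ {ω | ξ ω < 0} := by
      intro ω hω
      rcases lt_or_gt_of_ne hω with h | h
      · exact Or.inr h
      · exact Or.inl h
    refine le_antisymm (le_trans (measure_mono hsub) ?_) zero_le
    refine le_trans (measure_union_le _ _) ?_
    rw [hcon, hneg_eq, hcon]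
    simp
  have hcup : {ω | 0 < ξ ω} = ⋃ k : ℕ, {ω | 1 / (k + 1 : ℝ) < ξ ω} := by
    ext ω
    simp only [Set.mem_setOf_eq, Set.mem_iUnion]
    constructor
    · intro h
      obtain ⟨k, hk⟩ := exists_nat_one_div_lt h
      exact ⟨k, hk⟩
    · intro ⟨k, hk⟩
      exact lt_trans (by positivity) hk
  by_contra hcon
  push_neg at hcon
  apply hpos
  rw [hcup]
  refine measure_iUnion_null fun k => ?_
  have := hcon (1 / (k + 1 : ℝ)) (by positivity)
  exact le_antisymm this zero_le

/-- The rate function is bounded on `[0, v₀/2]`. -/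
lemma rateFn_bounded (hξ : Measurable ξ) (hsym : SymmetricRV μ₀ ξ) {v₀ : ℝ} (hv₀ : 0 < v₀)
    (hpos : 0 < μ₀ {ω | v₀ < ξ ω}) {v : ℝ} (h0 : 0 ≤ v) (hv : v ≤ v₀ / 2) :
    rateFn μ₀ ξ v ≤ ((-Real.log ((μ₀ {ω | v₀ < ξ ω}).toReal) : ℝ) : EReal) := by
  set P₀ : ℝ := (μ₀ {ω | v₀ < ξ ω}).toReal with hP₀
  have hP₀pos : 0 < P₀ := ENNReal.toReal_pos hpos.ne' (measure_ne_top _ _)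
  have hP₀le : P₀ ≤ 1 := by
    rw [hP₀]
    exact ENNReal.toReal_le_of_le_ofReal zero_le_one (by simpa using prob_le_one)
  have hC0 : 0 ≤ -Real.log P₀ := by
    rw [neg_nonneg]
    exact Real.log_nonpos hP₀pos.le hP₀le
  refine iSup_le fun s => ?_
  by_cases hint : Integrable (fun ω => Real.exp (s * ξ ω)) μ₀
  · rw [lmgf_of_integrable hint, ← EReal.coe_sub, EReal.coe_le_coe_iff]
    set Is : ℝ := ∫ ω, Real.exp (s * ξ ω) ∂μ₀ with hIs
    have hIspos : 0 < Is := lt_of_lt_of_le one_pos (one_le_integral_exp hξ hsym s hint)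
    rcases le_or_gt 0 s with hs | hs
    · -- lower bound on the mgf via the event {v₀ < ξ}
      have hSmeas : MeasurableSet {ω | v₀ < ξ ω} := hξ measurableSet_Ioi
      have hlow : Real.exp (s * v₀) * P₀ ≤ Is := by
        have hind : ∀ ω, Set.indicator {ω | v₀ < ξ ω} (fun _ => Real.exp (s * v₀)) ω
            ≤ Real.exp (s * ξ ω) := by
          intro ω
          rcases Set.indicator_eq_zero_or_self {ω | v₀ < ξ ω}
            (fun _ => Real.exp (s * v₀)) ω with h | h
          · rw [h]; exact (Real.exp_pos _).le
          · rw [h]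
            by_cases hω : ω ∈ {ω | v₀ < ξ ω}
            · exact Real.exp_le_exp.mpr (mul_le_mul_of_nonneg_left hω.le hs)
            · rw [Set.indicator_of_notMem hω] at h
              rw [← h]; exact (Real.exp_pos _).le
        have hintind : Integrable
            (Set.indicator {ω | v₀ < ξ ω} (fun _ => Real.exp (s * v₀))) μ₀ :=
          (integrable_const _).indicator hSmeas
        have := integral_mono hintind hint hind
        rwa [integral_indicator_const _ hSmeas, smul_eq_mul, mul_comm] at this
      have hlog : s * v₀ + Real.log P₀ ≤ Real.log Is := by
        have := Real.log_le_log (by positivity) hlow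
        rwa [Real.log_mul (Real.exp_pos _).ne' hP₀pos.ne', Real.log_exp] at this
      have hsv : s * v ≤ s * v₀ := mul_le_mul_of_nonneg_left (by linarith) hs
      linarith
    · -- negative s: the term is at most 0
      have hlog0 : 0 ≤ Real.log Is :=
        Real.log_nonneg (one_le_integral_exp hξ hsym s hint)
      nlinarith
  · rw [lmgf, if_neg hint, EReal.sub_top]
    exact bot_le

/-- Eventually, `Λ*⁻¹(log n) ≥ v₀/2`. -/
lemma eventually_inv_ge (hξ : Measurable ξ) (hsym : SymmetricRV μ₀ ξ)
    (hfin : FiniteLmgfNearZero μ₀ ξ) {v₀ : ℝ} (hv₀ : 0 < v₀)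
    (hpos : 0 < μ₀ {ω | v₀ < ξ ω}) :
    ∀ᶠ n : ℕ in atTop, v₀ / 2 ≤ rateFnInv μ₀ ξ (Real.log n) := by
  set C : ℝ := -Real.log ((μ₀ {ω | v₀ < ξ ω}).toReal) with hC
  have hlog : Tendsto (fun n : ℕ => Real.log n) atTop atTop :=
    Real.tendsto_log_atTop.comp tendsto_natCast_atTop_atTop
  filter_upwards [hlog.eventually_gt_atTop C] with n hn
  by_contra hcon
  push_neg at hcon
  obtain ⟨v, ⟨hv0, hvrate⟩, _, hvlt⟩ :=
    rateFnInv_exists_near hξ hsym hfin (Real.log n) (show 0 < v₀ / 2 - rateFnInv μ₀ ξ (Real.log n) by linarith)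
  have hvle : v ≤ v₀ / 2 := by linarith
  have := le_trans hvrate (rateFn_bounded hξ hsym hv₀ hpos hv0 hvle)
  rw [EReal.coe_le_coe_iff] at this
  linarith

end AuxNondeg
noncomputable section AuxProb
set_option linter.unusedSectionVars false

open MeasureTheory ProbabilityTheory Real Filter
open scoped ENNReal NNReal

variable {Ω₀ : Type*} [MeasurableSpace Ω₀] {μ₀ : Measure Ω₀} [IsProbabilityMeasure μ₀]
  {ξ : Ω₀ → ℝ}

lemma log_nat_mono : Monotone (fun n : ℕ => Real.log n) := by
  intro n m hnm
  rcases Nat.eq_zero_or_pos n with h0 | hpos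
  · subst h0
    simp only [Nat.cast_zero, Real.log_zero]
    rcases Nat.eq_zero_or_pos m with h0' | hpos'
    · subst h0'; simp
    · exact Real.log_nonneg (by exact_mod_cast hpos')
  · exact Real.log_le_log (by exact_mod_cast hpos) (by exact_mod_cast hnm)

lemma rateFnInv_log_mono (hξ : Measurable ξ) (hsym : SymmetricRV μ₀ ξ)
    (hfin : FiniteLmgfNearZero μ₀ ξ) :
    Monotone (fun n : ℕ => rateFnInv μ₀ ξ (Real.log n)) := by
  intro n m hnm
  refine csInf_le_csInf ⟨0, fun x hx => hx.1⟩ (rateFnInv_set_nonempty hξ hsym hfin _) ?_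
  intro s hs
  refine ⟨hs.1, le_trans ?_ hs.2⟩
  exact_mod_cast EReal.coe_le_coe_iff.mpr (log_nat_mono hnm)

lemma eventually_np_large (hξ : Measurable ξ) (hsym : SymmetricRV μ₀ ξ)
    (hfin : FiniteLmgfNearZero μ₀ ξ) (htails : RegularUpperTails μ₀ ξ)
    (hne : ¬ ∀ᵐ ω ∂μ₀, ξ ω = 0) {ε : ℝ} (hε : 0 < ε) (hε2 : ε ≤ 1/2) :
    ∀ᶠ n : ℕ in atTop, 10 * Real.log n ≤
      (n:ℝ) * (μ₀ {ω | (1 - ε/2) * rateFnInv μ₀ ξ (Real.log n) < ξ ω}).toReal := by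
  classical
  set J : ℕ → ℝ := fun n => rateFnInv μ₀ ξ (Real.log n) with hJdef
  have hJ0 : ∀ n, 0 ≤ J n := fun n => rateFnInv_nonneg _
  have hc2pos : (0:ℝ) < 1 - ε/2 := by linarith
  have hc4pos : (0:ℝ) < 1 - ε/4 := by linarith
  by_cases hbdd : BddAbove (Set.range J)
  · -- bounded case: constant positive probability
    obtain ⟨v₀, hv₀pos, hv₀⟩ := exists_pos_level hξ hsym hne
    obtain ⟨n₀, hn₀⟩ := (eventually_inv_ge hξ hsym hfin hv₀pos hv₀).exists
    set I : ℝ := ⨆ n : ℕ, J n with hI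
    have hJle : ∀ n, J n ≤ I := fun n => le_ciSup hbdd n
    have hIpos : 0 < I := lt_of_lt_of_le (by linarith) (le_trans hn₀ (hJle n₀))
    set v : ℝ := (1 - ε/3) * I with hv
    have huv : (1 - ε/2) * I < v := by
      rw [hv]
      apply mul_lt_mul_of_pos_right (by linarith) hIpos
    have hvI : v < I := by
      rw [hv]
      nlinarith
    obtain ⟨n₁, hn₁⟩ := exists_lt_of_lt_ciSup hvI
    have hvrate : rateFn μ₀ ξ v ≠ ⊤ := by
      have := rateFn_lt_of_lt_inv (by nlinarith : 0 ≤ v) hn₁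
      exact ne_top_of_lt (lt_trans this (EReal.coe_lt_top _))
    have hppos : 0 < μ₀ {ω | (1 - ε/2) * I < ξ ω} :=
      measure_gt_pos hξ hsym (by positivity) huv hvrate
    set p : ℝ := (μ₀ {ω | (1 - ε/2) * I < ξ ω}).toReal with hp
    have hppos' : 0 < p := ENNReal.toReal_pos hppos.ne' (measure_ne_top _ _)
    have hple : ∀ n : ℕ,
        p ≤ (μ₀ {ω | (1 - ε/2) * J n < ξ ω}).toReal := by
      intro n
      refine ENNReal.toReal_mono (measure_ne_top _ _) (measure_mono ?_)
      intro ω hω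
      simp only [Set.mem_setOf_eq] at hω ⊢
      have : (1 - ε/2) * J n ≤ (1 - ε/2) * I :=
        mul_le_mul_of_nonneg_left (hJle n) hc2pos.le
      linarith
    have hev : ∀ᶠ x : ℝ in atTop, ‖Real.log x‖ ≤ p/10 * ‖x‖ :=
      Real.isLittleO_log_id_atTop.def (by positivity)
    filter_upwards [tendsto_natCast_atTop_atTop.eventually hev,
      eventually_ge_atTop 1] with n hev' hn1
    have hlog0 : 0 ≤ Real.log n := Real.log_nonneg (by exact_mod_cast hn1)
    have hn0 : (0:ℝ) ≤ (n:ℝ) := Nat.cast_nonneg n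
    simp only [Real.norm_eq_abs, id_eq] at hev'
    rw [abs_of_nonneg hlog0, abs_of_nonneg hn0] at hev'
    have := hple n
    nlinarith
  · -- unbounded case: use the regular upper tails
    have hJmono : Monotone J := rateFnInv_log_mono hξ hsym hfin
    have hJtop : Tendsto J atTop atTop := tendsto_atTop_atTop_of_monotone' hJmono hbdd
    set β : ℝ := (ε/4)/(1-ε/4) with hβ
    have hβpos : 0 < β := by positivity
    have hβlt : β < 1 := by
      rw [hβ, div_lt_one hc4pos]; linarith
    have hβle : (1+β/2)*(1-β) ≤ 1 - β/2 := by nlinarith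
    obtain ⟨T, hT⟩ := (htails (β/2) (by positivity)).exists_forall_of_atTop
    have hutop : Tendsto (fun n => (1 - ε/2) * J n) atTop atTop :=
      hJtop.const_mul_atTop hc2pos
    have hev : ∀ᶠ x : ℝ in atTop, ‖Real.log x‖ ≤ 1/10 * ‖x ^ (β/2)‖ :=
      (isLittleO_log_rpow_atTop (by positivity)).def (by norm_num)
    filter_upwards [hutop.eventually_ge_atTop T, hJtop.eventually_gt_atTop 0,
      tendsto_natCast_atTop_atTop.eventually hev, eventually_ge_atTop 1] with n hTn hJpos hev' hn1
    have hnpos : (0:ℝ) < (n:ℝ) := by exact_mod_cast hn1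
    have hlog0 : 0 ≤ Real.log n := Real.log_nonneg (by exact_mod_cast hn1)
    -- rate function bound at u_n
    set v : ℝ := (1 - ε/4) * J n with hv
    have hv0 : 0 ≤ v := by positivity
    have hvJ : v < J n := by rw [hv]; nlinarith
    have hrlt : rateFn μ₀ ξ v < ((Real.log n : ℝ) : EReal) := rateFn_lt_of_lt_inv hv0 hvJ
    set c : ℝ := (1 - ε/2)/(1 - ε/4) with hc
    have hc0 : 0 ≤ c := by positivity
    have hc1 : c ≤ 1 := by
      rw [hc, div_le_one hc4pos]; linarith
    have hcv : c * v = (1 - ε/2) * J n := by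
      rw [hc, hv, ← mul_assoc, div_mul_cancel₀ _ hc4pos.ne']
    have hsmul : rateFn μ₀ ξ ((1 - ε/2) * J n) ≤ ((c * Real.log n : ℝ) : EReal) := by
      rw [← hcv]
      exact rateFn_smul_le hξ hsym hc0 hc1 hrlt.le
    have hne_top : rateFn μ₀ ξ ((1 - ε/2) * J n) ≠ ⊤ :=
      ne_top_of_le_ne_top (EReal.coe_ne_top _) hsmul
    have hne_bot : rateFn μ₀ ξ ((1 - ε/2) * J n) ≠ ⊥ := by
      intro hcon
      have := rateFn_nonneg_s9 (μ₀ := μ₀) (ξ := ξ) ((1 - ε/2) * J n)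
      rw [hcon] at this
      simp at this
    set r : ℝ := (rateFn μ₀ ξ ((1 - ε/2) * J n)).toReal with hr
    have hrcoe : rateFn μ₀ ξ ((1 - ε/2) * J n) = ((r:ℝ) : EReal) :=
      (EReal.coe_toReal hne_top hne_bot).symm
    have hr0 : 0 ≤ r := by
      have := rateFn_nonneg_s9 (μ₀ := μ₀) (ξ := ξ) ((1 - ε/2) * J n)
      rw [hrcoe] at this
      exact_mod_cast this
    have hrle : r ≤ c * Real.log n := by
      rw [hrcoe] at hsmul
      exact_mod_cast hsmul
    obtain ⟨hlb, _⟩ := hT ((1 - ε/2) * J n) hTn r hrcoe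
    have hceq : c = 1 - β := by
      rw [hc, hβ, eq_sub_iff_add_eq, ← add_div,
        show (1:ℝ) - ε/2 + ε/4 = 1 - ε/4 by ring]
      exact div_self hc4pos.ne'
    -- lower bound on p
    have hpn : Real.exp (-(1 - β/2) * Real.log n)
        ≤ (μ₀ {ω | (1 - ε/2) * J n < ξ ω}).toReal := by
      refine le_trans ?_ hlb
      rw [Real.exp_le_exp]
      have h1 : (1+β/2) * r ≤ (1+β/2) * ((1-β) * Real.log n) := by
        have := mul_le_mul_of_nonneg_left (hrle.trans_eq (by rw [hceq]))
          (by positivity : (0:ℝ) ≤ 1 + β/2)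
        linarith
      nlinarith
    rw [Real.norm_eq_abs, Real.norm_eq_abs, abs_of_nonneg hlog0,
      abs_of_nonneg (Real.rpow_nonneg hnpos.le _)] at hev'
    rw [Real.rpow_def_of_pos hnpos] at hev'
    have hkey : Real.exp (Real.log n * (β/2)) ≤ (n:ℝ) *
        (μ₀ {ω | (1 - ε/2) * J n < ξ ω}).toReal := by
      have hn_eq : (n:ℝ) = Real.exp (Real.log n) := (Real.exp_log hnpos).symm
      calc Real.exp (Real.log n * (β/2))
          = Real.exp (Real.log n) * Real.exp (-(1 - β/2) * Real.log n) := by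
            rw [← Real.exp_add]; ring_nf
        _ ≤ (n:ℝ) * (μ₀ {ω | (1 - ε/2) * J n < ξ ω}).toReal := by
            rw [← hn_eq]
            exact mul_le_mul_of_nonneg_left hpn hnpos.le
    linarith

end AuxProb
noncomputable section AuxParam
set_option linter.unusedSectionVars false

open MeasureTheory ProbabilityTheory Real Filter
open scoped ENNReal NNReal

variable {Ω₀ : Type*} [MeasurableSpace Ω₀] {μ₀ : Measure Ω₀} [IsProbabilityMeasure μ₀]
  {ξ : Ω₀ → ℝ}

lemma chernoff_param (hξ : Measurable ξ) (hsym : SymmetricRV μ₀ ξ)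
    (hfin : FiniteLmgfNearZero μ₀ ξ) {ε : ℝ} (hε : 0 < ε) {n : ℕ}
    (hJpos : 0 < rateFnInv μ₀ ξ (Real.log n)) (hlog2 : 2 ≤ Real.log n) :
    ∃ s r : ℝ, 0 ≤ s ∧ lmgf μ₀ ξ s = (r : EReal) ∧
      (1 + (ε/2)/(1+ε/2)) * (Real.log n - 1)
        ≤ s * ((1+ε) * rateFnInv μ₀ ξ (Real.log n)) - r := by
  set J : ℝ := rateFnInv μ₀ ξ (Real.log n) with hJ
  set c : ℝ := (ε/2)/(1+ε/2) with hc
  have hc2 : (0:ℝ) < 1 + ε/2 := by linarith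
  have hcpos : 0 < c := by positivity
  obtain ⟨v, ⟨hv0, hvrate⟩, hJv, hvlt⟩ :=
    rateFnInv_exists_near hξ hsym hfin (Real.log n)
      (show 0 < (ε/2) * J by positivity)
  have hlt : ((Real.log n - 1 : ℝ) : EReal) < rateFn μ₀ ξ v :=
    lt_of_lt_of_le (EReal.coe_lt_coe_iff.mpr (by linarith)) hvrate
  obtain ⟨s, hs⟩ := exists_term_gt hlt
  obtain ⟨r, hlm, hr0, hineq⟩ := term_extract hξ hsym hs
  have hs0 : 0 ≤ s := by
    by_contra hcon
    push_neg at hcon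
    have hsv : s * v ≤ 0 := mul_nonpos_iff.mpr (Or.inr ⟨hcon.le, hv0⟩)
    linarith
  refine ⟨s, r, hs0, hlm, ?_⟩
  have hid : (1 + c) * (1 + ε/2) = 1 + ε := by
    have : c * (1 + ε/2) = ε/2 := div_mul_cancel₀ _ hc2.ne'
    nlinarith
  have h2 : (1+c) * v ≤ (1+ε) * J := by
    have hv' : v ≤ (1 + ε/2) * J := by nlinarith
    calc (1+c) * v ≤ (1+c) * ((1 + ε/2) * J) :=
          mul_le_mul_of_nonneg_left hv' (by positivity)
      _ = (1+ε) * J := by rw [← mul_assoc, hid]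
  have h3 : s * ((1+c) * v) ≤ s * ((1+ε) * J) := mul_le_mul_of_nonneg_left h2 hs0
  have h4 : (1+c) * (s*v - r) ≤ s * ((1+c)*v) - r := by nlinarith
  have h5 : (1+c) * (Real.log n - 1) ≤ (1+c) * (s*v - r) :=
    mul_le_mul_of_nonneg_left hineq.le (by positivity)
  linarith

end AuxParam
open MeasureTheory ProbabilityTheory Real Filter
open scoped ENNReal NNReal

/-- with i.i.d. good edge weights on `K_{n,n}`, the maximal weight `W_n` of a
perfect matching satisfies `W_n = (1 + o(1)) n Λ*⁻¹(log n)` with high probability. -/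
theorem assignment_whp {Ω₀ : Type*} [MeasurableSpace Ω₀] (μ₀ : Measure Ω₀)
    [IsProbabilityMeasure μ₀] (ξ : Ω₀ → ℝ) (hξ : Measurable ξ) (hgood : Good μ₀ ξ)
    {Ω : ℕ → Type*} [∀ n, MeasurableSpace (Ω n)] (μ : ∀ n, Measure (Ω n))
    [∀ n, IsProbabilityMeasure (μ n)]
    (X : ∀ n, Fin n × Fin n → Ω n → ℝ) (hmeas : ∀ n e, Measurable (X n e))
    (hind : ∀ n, iIndepFun (X n) (μ n))
    (hid : ∀ n e, IdentDistrib (X n e) ξ (μ n) μ₀)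
    (ε : ℝ) (hε : 0 < ε) :
    Tendsto (fun n : ℕ => μ n {ω |
        ε * ((n : ℝ) * rateFnInv μ₀ ξ (Real.log n)) <
          |(⨆ σ : Equiv.Perm (Fin n), ∑ i, X n (i, σ i) ω) -
            (n : ℝ) * rateFnInv μ₀ ξ (Real.log n)|}) atTop (nhds 0) := by
  classical
  obtain ⟨hsym, hfin, htails⟩ := hgood
  have hJ0 : ∀ n : ℕ, 0 ≤ rateFnInv μ₀ ξ (Real.log n) := fun n => rateFnInv_nonneg _
  -- reduce to ε ≤ 1/2
  set ε' : ℝ := min ε (1/2) with hε'def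
  have hε'pos : 0 < ε' := lt_min hε (by norm_num)
  have hε'le : ε' ≤ 1/2 := min_le_right _ _
  have hε'ε : ε' ≤ ε := min_le_left _ _
  suffices H : Tendsto (fun n : ℕ => μ n {ω |
      ε' * ((n : ℝ) * rateFnInv μ₀ ξ (Real.log n)) <
        |(⨆ σ : Equiv.Perm (Fin n), ∑ i, X n (i, σ i) ω) -
          (n : ℝ) * rateFnInv μ₀ ξ (Real.log n)|}) atTop (nhds 0) by
    refine tendsto_of_tendsto_of_tendsto_of_le_of_le tendsto_const_nhds H
      (fun n => zero_le) (fun n => measure_mono ?_)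
    intro ω hω
    simp only [Set.mem_setOf_eq] at hω ⊢
    refine lt_of_le_of_lt ?_ hω
    have : (0:ℝ) ≤ (n:ℝ) * rateFnInv μ₀ ξ (Real.log n) :=
      mul_nonneg (Nat.cast_nonneg n) (hJ0 n)
    exact mul_le_mul_of_nonneg_right hε'ε this
  by_cases hdeg : ∀ᵐ ω ∂μ₀, ξ ω = 0
  · -- degenerate case : `ξ = 0` a.s.
    have hzero : ∀ n : ℕ, μ n {ω |
        ε' * ((n : ℝ) * rateFnInv μ₀ ξ (Real.log n)) <
          |(⨆ σ : Equiv.Perm (Fin n), ∑ i, X n (i, σ i) ω) -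
            (n : ℝ) * rateFnInv μ₀ ξ (Real.log n)|} = 0 := by
      intro n
      have hJn : rateFnInv μ₀ ξ (Real.log n) = 0 := rateFnInv_degenerate hdeg _
      have hae : ∀ᵐ ω ∂(μ n), ∀ e, X n e ω = 0 := by
        rw [ae_all_iff]
        intro e
        rw [ae_iff]
        have hpre : {ω | ¬ X n e ω = 0} = (X n e) ⁻¹' ({0}ᶜ) := by ext ω; simp
        rw [hpre, identDistrib_measure_preimage (hid n e) (measurableSet_singleton 0).compl]
        have h2 : ξ ⁻¹' ({0}ᶜ : Set ℝ) = {ω | ¬ ξ ω = 0} := by ext ω; simp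
        rw [h2, ← ae_iff]
        exact hdeg
      refine measure_mono_null ?_ (ae_iff.mp hae)
      intro ω hω
      simp only [Set.mem_setOf_eq, hJn, mul_zero, sub_zero] at hω ⊢
      intro hcon
      have hWzero : (⨆ σ : Equiv.Perm (Fin n), ∑ i, X n (i, σ i) ω) = 0 := by
        have : ∀ σ : Equiv.Perm (Fin n), ∑ i, X n (i, σ i) ω = 0 :=
          fun σ => Finset.sum_eq_zero (fun i _ => hcon (i, σ i))
        simp only [this]
        exact ciSup_const
      rw [hWzero] at hω
      simp at hω
    have heq : (fun n : ℕ => μ n {ω |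
        ε' * ((n : ℝ) * rateFnInv μ₀ ξ (Real.log n)) <
          |(⨆ σ : Equiv.Perm (Fin n), ∑ i, X n (i, σ i) ω) -
            (n : ℝ) * rateFnInv μ₀ ξ (Real.log n)|}) = fun _ => 0 := funext hzero
    rw [heq]
    exact tendsto_const_nhds
  · -- nondegenerate case
    obtain ⟨v₀, hv₀pos, hv₀⟩ := exists_pos_level hξ hsym hdeg
    set c : ℝ := (ε'/2)/(1+ε'/2) with hc
    have hcpos : 0 < c := by positivity
    have hlogtop : Tendsto (fun n : ℕ => Real.log n) atTop atTop :=
      Real.tendsto_log_atTop.comp tendsto_natCast_atTop_atTop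
    -- limit of the bounding sequence
    have hBlim : Tendsto (fun n : ℕ => ENNReal.ofReal (Real.exp (-(n:ℝ)) + (n:ℝ)⁻¹))
        atTop (nhds 0) := by
      have h1 : Tendsto (fun n : ℕ => Real.exp (-(n:ℝ)) + (n:ℝ)⁻¹) atTop (nhds 0) := by
        have ha : Tendsto (fun n : ℕ => Real.exp (-(n:ℝ))) atTop (nhds 0) :=
          Real.tendsto_exp_atBot.comp
            (tendsto_neg_atBot_iff.mpr tendsto_natCast_atTop_atTop)
        have hb : Tendsto (fun n : ℕ => ((n:ℝ))⁻¹) atTop (nhds 0) :=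
          tendsto_inv_atTop_nhds_zero_nat
        simpa using ha.add hb
      have := ENNReal.tendsto_ofReal h1
      simpa using this
    refine tendsto_of_tendsto_of_tendsto_of_le_of_le' tendsto_const_nhds hBlim
      (Eventually.of_forall (fun n => zero_le)) ?_
    filter_upwards [eventually_inv_ge hξ hsym hfin hv₀pos hv₀,
      eventually_np_large hξ hsym hfin htails hdeg hε'pos hε'le,
      hlogtop.eventually_ge_atTop ((2+c)/c), hlogtop.eventually_ge_atTop 2,
      eventually_ge_atTop 1] with n hJv₀ hnp hlogc hlog2 hn1
    set J : ℝ := rateFnInv μ₀ ξ (Real.log n) with hJ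
    have hJpos : 0 < J := lt_of_lt_of_le (by linarith) hJv₀
    have hnpos : (0:ℝ) < (n:ℝ) := by exact_mod_cast hn1
    haveI : Nonempty (Fin n) := ⟨⟨0, by omega⟩⟩
    -- split the event
    have hsplit : {ω | ε' * ((n : ℝ) * J) <
          |(⨆ σ : Equiv.Perm (Fin n), ∑ i, X n (i, σ i) ω) - (n : ℝ) * J|}
        ⊆ {ω | (n:ℝ) * ((1+ε') * J) < ⨆ σ : Equiv.Perm (Fin n), ∑ i, X n (i, σ i) ω}
          ∪ {ω | ¬ ∃ σ : Equiv.Perm (Fin n), ∀ i, (1 - ε'/2) * J < X n (i, σ i) ω} := by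
      intro ω hω
      simp only [Set.mem_setOf_eq, Set.mem_union] at hω ⊢
      rcases lt_abs.mp hω with h | h
      · left
        have hr : (n:ℝ) * ((1+ε') * J) = (n:ℝ) * J + ε' * ((n:ℝ) * J) := by ring
        linarith
      · right
        rintro ⟨σ, hσ⟩
        have hsum : (n:ℝ) * ((1 - ε'/2) * J) < ∑ i, X n (i, σ i) ω := by
          have := Finset.sum_lt_sum_of_nonempty Finset.univ_nonempty
            (fun i _ => hσ i)
          rw [Finset.sum_const, Finset.card_univ, Fintype.card_fin, nsmul_eq_mul] at this
          exact this
        have hW : ∑ i, X n (i, σ i) ω ≤ ⨆ σ : Equiv.Perm (Fin n), ∑ i, X n (i, σ i) ω :=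
          le_ciSup (f := fun σ : Equiv.Perm (Fin n) => ∑ i, X n (i, σ i) ω)
            (Set.Finite.bddAbove (Set.finite_range _)) σ
        have hge : (n:ℝ) * J - ε' * ((n:ℝ) * J) ≤ (n:ℝ) * ((1 - ε'/2) * J) := by
          have h1 : (n:ℝ) * ((1 - ε'/2) * J) - ((n:ℝ) * J - ε' * ((n:ℝ) * J))
              = (ε'/2) * ((n:ℝ) * J) := by ring
          nlinarith [mul_nonneg hnpos.le (hJ0 n)]
        linarith
    refine le_trans (measure_mono hsplit) (le_trans (measure_union_le _ _) ?_)
    -- the upper deviation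
    have hupper : μ n {ω | (n:ℝ) * ((1+ε') * J)
          < ⨆ σ : Equiv.Perm (Fin n), ∑ i, X n (i, σ i) ω}
        ≤ ENNReal.ofReal (Real.exp (-(n:ℝ))) := by
      obtain ⟨s, r, hs0, hlm, hkey⟩ := chernoff_param hξ hsym hfin hε'pos hJpos hlog2
      refine le_trans (upper_bound_n (X n) (hmeas n) (hind n) (hid n) hs0 hlm) ?_
      refine ENNReal.ofReal_le_ofReal ?_
      have hpow : ((n:ℝ))^n = Real.exp ((n:ℝ) * Real.log n) := by
        rw [← Real.exp_log (show (0:ℝ) < ((n:ℝ))^n by positivity), Real.log_pow]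
      rw [hpow, ← Real.exp_add, Real.exp_le_exp]
      have hclog : 2 + c ≤ c * Real.log n := by linarith [(div_le_iff₀ hcpos).mp hlogc]
      have hkey' : (n:ℝ) * ((1 + c) * (Real.log n - 1))
          ≤ (n:ℝ) * (s * ((1+ε') * J) - r) :=
        mul_le_mul_of_nonneg_left hkey hnpos.le
      nlinarith
    -- the lower deviation via Hall's theorem
    have hlower : μ n {ω | ¬ ∃ σ : Equiv.Perm (Fin n), ∀ i, (1 - ε'/2) * J < X n (i, σ i) ω}
        ≤ ENNReal.ofReal ((n:ℝ)⁻¹) := by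
      set p : ℝ := (μ₀ {ω | (1 - ε'/2) * J < ξ ω}).toReal with hp
      have hD3 : 3 * Real.log n ≤ (n:ℝ) * p / 2 - 2 * Real.log n := by
        rw [hp, hJ]
        linarith [hnp]
      have hD0 : 0 ≤ (n:ℝ) * p / 2 - 2 * Real.log n := by linarith
      refine le_trans (hall_fail_bound hn1 hξ (X n) (hmeas n) (hind n) (hid n)
        ((1 - ε'/2) * J) (by rw [← hp]; exact hD0)) ?_
      refine ENNReal.ofReal_le_ofReal ?_
      rw [← hp]
      have h1 : Real.exp (-((n:ℝ) * p / 2 - 2 * Real.log n))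
          ≤ Real.exp (-(3 * Real.log n)) := by
        rw [Real.exp_le_exp]; linarith
      have hneq : (n:ℝ) = Real.exp (Real.log n) := (Real.exp_log hnpos).symm
      calc (n:ℝ) * Real.exp (-((n:ℝ) * p / 2 - 2 * Real.log n))
          ≤ (n:ℝ) * Real.exp (-(3 * Real.log n)) :=
            mul_le_mul_of_nonneg_left h1 hnpos.le
        _ = Real.exp (Real.log n + -(3 * Real.log n)) := by
            rw [Real.exp_add, ← hneq]
        _ ≤ Real.exp (-Real.log n) := by
            rw [Real.exp_le_exp]
            linarith
        _ = ((n:ℝ))⁻¹ := by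
            rw [Real.exp_neg, ← hneq]
    calc μ n {ω | (n:ℝ) * ((1+ε') * J)
            < ⨆ σ : Equiv.Perm (Fin n), ∑ i, X n (i, σ i) ω}
          + μ n {ω | ¬ ∃ σ : Equiv.Perm (Fin n), ∀ i, (1 - ε'/2) * J < X n (i, σ i) ω}
        ≤ ENNReal.ofReal (Real.exp (-(n:ℝ))) + ENNReal.ofReal ((n:ℝ)⁻¹) :=
          add_le_add hupper hlower
      _ = ENNReal.ofReal (Real.exp (-(n:ℝ)) + (n:ℝ)⁻¹) :=
          (ENNReal.ofReal_add (Real.exp_pos _).le (by positivity)).symm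
end
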